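/- arXiv:1312.6979 — 2 statements merged into one kernel-verified Lean document; each statement's English description precedes it below -/
import Mathlib

section
/- There exists a constant C < ∞ such that for every unit vector n = (n₁, n₂) ∈ ℝ² and every δ with 0 < δ ≤ 1/3, the two-dimensional Lebesgue measure of the set {u ∈ [0,1)² : |n₁·sin(2π(u₁ + u₂)) + n₂·sin(2π(u₁ − u₂))| < δ} is at most C·δ·|log δ|. -/
open MeasureTheory Real

/-- The fundamental domain `[0,1)²` of the two-dimensional torus. -/
def box2 : Set (Fin 2 → ℝ) := Set.univ.pi fun _ => Set.Ico (0 : ℝ) 1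

section Helpers

open Set
open scoped ENNReal

/-- Jordan's inequality in absolute-value form. -/
lemma jordan_abs {y : ℝ} (h : |y| ≤ π / 2) : 2 / π * |y| ≤ |Real.sin y| := by
  rcases le_or_gt 0 y with hy | hy
  · rw [abs_of_nonneg hy]
    have h2 : y ≤ π / 2 := (le_abs_self y).trans h
    have hs : 0 ≤ Real.sin y :=
      Real.sin_nonneg_of_nonneg_of_le_pi hy (h2.trans (by linarith [Real.pi_pos]))
    rw [abs_of_nonneg hs]
    exact Real.mul_le_sin hy h2
  · have hy' : 0 ≤ -y := by linarith
    have h2 : -y ≤ π / 2 := (le_abs_self (-y)).trans (by rwa [abs_neg])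
    have hs : 0 ≤ Real.sin (-y) :=
      Real.sin_nonneg_of_nonneg_of_le_pi hy' (h2.trans (by linarith [Real.pi_pos]))
    have := Real.mul_le_sin hy' h2
    rw [abs_of_neg hy]
    calc 2 / π * (-y) ≤ Real.sin (-y) := this
    _ ≤ |Real.sin (-y)| := le_abs_self _
    _ = |Real.sin y| := by rw [Real.sin_neg, abs_neg]

lemma abs_sin_sub_int_mul_pi (θ : ℝ) (k : ℤ) : |Real.sin (θ - k * π)| = |Real.sin θ| := by
  have : Real.sin (θ - k * π + k * π) = (-1) ^ k * Real.sin (θ - k * π) :=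
    Real.sin_add_int_mul_pi _ k
  simp only [sub_add_cancel] at this
  rw [this, abs_mul]
  rcases Int.even_or_odd k with hk | hk
  · rw [hk.neg_one_zpow]; simp
  · rw [hk.neg_one_zpow]; simp

/-- Jordan lower bound near the nearest multiple of π. -/
lemma abs_sin_ge (θ : ℝ) (k : ℤ) (h : |θ - k * π| ≤ π / 2) :
    2 / π * |θ - k * π| ≤ |Real.sin θ| := by
  rw [← abs_sin_sub_int_mul_pi θ k]
  exact jordan_abs h

/-- Sublevel set of a shifted sine on `[0,1)` has measure at most `2 t`. -/
lemma sine_sublevel (φ t : ℝ) (ht : 0 < t) :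
    volume {x : ℝ | x ∈ Set.Ico (0 : ℝ) 1 ∧ |Real.sin (2 * π * x + φ)| < t}
      ≤ ENNReal.ofReal (2 * t) := by
  have hπ : (0 : ℝ) < π := Real.pi_pos
  set k₀ : ℤ := ⌈φ / π - 1 / 2⌉ with hk₀
  have hsub : {x : ℝ | x ∈ Set.Ico (0 : ℝ) 1 ∧ |Real.sin (2 * π * x + φ)| < t} ⊆
      ⋃ k ∈ Finset.Icc k₀ (k₀ + 3), Metric.ball (((k : ℝ) * π - φ) / (2 * π)) (t / 4) := by
    rintro x ⟨⟨hx0, hx1⟩, hxs⟩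
    set θ : ℝ := 2 * π * x + φ with hθ
    set k : ℤ := round (θ / π) with hk
    have h1 : |θ / π - k| ≤ 1 / 2 := abs_sub_round _
    have h2 : |θ - k * π| ≤ π / 2 := by
      have he : θ - k * π = (θ / π - k) * π := by field_simp
      rw [he, abs_mul, abs_of_pos hπ]
      nlinarith
    have h3 : 2 / π * |θ - k * π| ≤ |Real.sin θ| := abs_sin_ge θ k h2
    have h4 : |θ - k * π| < π * t / 2 := by
      have hlt : 2 / π * |θ - k * π| < t := lt_of_le_of_lt h3 hxs
      have he : |θ - (k : ℝ) * π| = π / 2 * (2 / π * |θ - (k : ℝ) * π|) := by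
        field_simp
      rw [he]
      calc π / 2 * (2 / π * |θ - (k : ℝ) * π|) < π / 2 * t :=
            mul_lt_mul_of_pos_left hlt (by positivity)
        _ = π * t / 2 := by ring
    have hball : x ∈ Metric.ball (((k : ℝ) * π - φ) / (2 * π)) (t / 4) := by
      rw [Metric.mem_ball, Real.dist_eq]
      have he : x - ((k : ℝ) * π - φ) / (2 * π) = (θ - k * π) / (2 * π) := by
        field_simp [hθ]; ring
      rw [he, abs_div, abs_of_pos (show (0:ℝ) < 2 * π by positivity)]
      rw [div_lt_iff₀ (by positivity)]
      nlinarith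
    refine Set.mem_biUnion ?_ hball
    have hround1 : (k : ℝ) ≤ θ / π + 1 / 2 := by
      have := abs_sub_round (θ / π)
      rw [abs_sub_comm] at this
      have := (abs_le.1 this).2
      linarith
    have hround2 : θ / π - 1 / 2 ≤ (k : ℝ) := by
      have := (abs_le.1 h1).2
      linarith
    have hθlb : φ ≤ θ := by nlinarith
    have hθub : θ < φ + 2 * π := by nlinarith
    have hφθ : φ / π ≤ θ / π := by gcongr
    have hθπ : θ / π < φ / π + 2 := by
      have heq : (φ + 2 * π) / π = φ / π + 2 := by field_simp
      have h6 : θ / π < (φ + 2 * π) / π := by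
        rw [div_lt_div_iff_of_pos_right hπ]; exact hθub
      linarith
    have hk1 : k₀ ≤ k := by
      rw [hk₀, Int.ceil_le]
      push_cast
      linarith
    have hk2 : k ≤ k₀ + 3 := by
      have hc : (φ / π - 1 / 2 : ℝ) ≤ (k₀ : ℝ) := Int.le_ceil _
      have hlt : (k : ℝ) < (k₀ : ℝ) + 3 := by linarith
      have : k < k₀ + 3 := by exact_mod_cast hlt
      exact this.le
    exact Finset.mem_Icc.2 ⟨hk1, hk2⟩
  calc volume {x : ℝ | x ∈ Set.Ico (0 : ℝ) 1 ∧ |Real.sin (2 * π * x + φ)| < t}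
      ≤ volume (⋃ k ∈ Finset.Icc k₀ (k₀ + 3), Metric.ball (((k : ℝ) * π - φ) / (2 * π)) (t / 4)) :=
        measure_mono hsub
    _ ≤ ∑ k ∈ Finset.Icc k₀ (k₀ + 3), volume (Metric.ball (((k : ℝ) * π - φ) / (2 * π)) (t / 4)) :=
        measure_biUnion_finset_le _ _
    _ = ∑ k ∈ Finset.Icc k₀ (k₀ + 3), ENNReal.ofReal (2 * (t / 4)) := by
        simp [Real.volume_ball]
    _ = 4 * ENNReal.ofReal (2 * (t / 4)) := by
        rw [Finset.sum_const]
        have : (Finset.Icc k₀ (k₀ + 3)).card = 4 := by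
          rw [Int.card_Icc]
          omega
        rw [this]
        simp [nsmul_eq_mul]
    _ = ENNReal.ofReal (2 * t) := by
        rw [show ((4 : ENNReal)) = ENNReal.ofReal 4 by norm_num, ← ENNReal.ofReal_mul (by norm_num)]
        congr 1
        ring

/-- Canonical logarithmic integral bound. -/
lemma b00 {ε L : ℝ} (hε : 0 < ε) (hεL : ε ≤ L) :
    ∫⁻ s in Set.Ico (0 : ℝ) L, min 1 (ENNReal.ofReal ε / ENNReal.ofReal s)
      ≤ ENNReal.ofReal (ε + ε * Real.log (L / ε)) := by
  have hL : 0 < L := lt_of_lt_of_le hε hεL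
  have hlog : 0 ≤ Real.log (L / ε) := Real.log_nonneg ((one_le_div hε).2 hεL)
  rw [← Set.Ico_union_Ico_eq_Ico hε.le hεL, lintegral_union measurableSet_Ico
    Set.Ico_disjoint_Ico_same]
  have h1 : ∫⁻ s in Set.Ico (0 : ℝ) ε, min 1 (ENNReal.ofReal ε / ENNReal.ofReal s)
      ≤ ENNReal.ofReal ε := by
    calc ∫⁻ s in Set.Ico (0 : ℝ) ε, min 1 (ENNReal.ofReal ε / ENNReal.ofReal s)
        ≤ ∫⁻ _ in Set.Ico (0 : ℝ) ε, 1 := lintegral_mono fun s => min_le_left _ _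
      _ = volume (Set.Ico (0 : ℝ) ε) := setLIntegral_one _
      _ = ENNReal.ofReal ε := by rw [Real.volume_Ico]; norm_num
  have h2 : ∫⁻ s in Set.Ico ε L, min 1 (ENNReal.ofReal ε / ENNReal.ofReal s)
      ≤ ENNReal.ofReal (ε * Real.log (L / ε)) := by
    have hmono : ∫⁻ s in Set.Ico ε L, min 1 (ENNReal.ofReal ε / ENNReal.ofReal s)
        ≤ ∫⁻ s in Set.Ico ε L, ENNReal.ofReal (ε * s⁻¹) := by
      refine setLIntegral_mono' measurableSet_Ico fun s hs => ?_
      have hs0 : 0 < s := lt_of_lt_of_le hε hs.1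
      refine (min_le_right _ _).trans ?_
      rw [← ENNReal.ofReal_div_of_pos hs0]
      exact ENNReal.ofReal_le_ofReal (by rw [div_eq_mul_inv])
    have hIoc : ∫⁻ s in Set.Ico ε L, ENNReal.ofReal (ε * s⁻¹)
        = ∫⁻ s in Set.Ioc ε L, ENNReal.ofReal (ε * s⁻¹) := by
      refine setLIntegral_congr ?_
      exact (Ioo_ae_eq_Ico (μ := volume) (a := ε) (b := L)).symm.trans Ioo_ae_eq_Ioc
    have hint : IntegrableOn (fun s : ℝ => ε * s⁻¹) (Set.Ioc ε L) := by
      have hc : ContinuousOn (fun s : ℝ => ε * s⁻¹) (Set.Icc ε L) := by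
        refine continuousOn_const.mul (ContinuousOn.inv₀ (continuousOn_id) ?_)
        intro x hx
        exact ne_of_gt (lt_of_lt_of_le hε hx.1)
      exact (hc.integrableOn_Icc).mono_set Set.Ioc_subset_Icc_self
    have heq : ∫⁻ s in Set.Ioc ε L, ENNReal.ofReal (ε * s⁻¹)
        = ENNReal.ofReal (∫ s in Set.Ioc ε L, ε * s⁻¹) := by
      rw [MeasureTheory.ofReal_integral_eq_lintegral_ofReal hint ?_]
      refine (ae_restrict_iff' measurableSet_Ioc).2 (Filter.Eventually.of_forall ?_)
      intro s hs
      have : 0 < s := lt_of_lt_of_le hε hs.1.le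
      positivity
    have hval : ∫ s in Set.Ioc ε L, ε * s⁻¹ = ε * Real.log (L / ε) := by
      rw [← intervalIntegral.integral_of_le hεL, intervalIntegral.integral_const_mul,
        integral_inv_of_pos hε hL]
    exact hmono.trans (le_of_eq (hIoc.trans (heq.trans (by rw [hval]))))
  calc _ ≤ ENNReal.ofReal ε + ENNReal.ofReal (ε * Real.log (L / ε)) := add_le_add h1 h2
    _ = ENNReal.ofReal (ε + ε * Real.log (L / ε)) := by
        rw [← ENNReal.ofReal_add hε.le (by positivity)]

/-- Symmetric version on a window centered at `c`. -/
lemma bwin (c : ℝ) {ε L : ℝ} (hε : 0 < ε) (hεL : ε ≤ L) :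
    ∫⁻ s in Set.Ico (c - L) (c + L), min 1 (ENNReal.ofReal ε / ENNReal.ofReal |s - c|)
      ≤ ENNReal.ofReal (2 * (ε + ε * Real.log (L / ε))) := by
  -- translate to center 0
  have htr : ∫⁻ s in Set.Ico (c - L) (c + L),
      min 1 (ENNReal.ofReal ε / ENNReal.ofReal |s - c|)
      = ∫⁻ s in Set.Ico (-L) L, min 1 (ENNReal.ofReal ε / ENNReal.ofReal |s|) := by
    have hmp : MeasurePreserving (fun x : ℝ => x + c) volume volume :=
      measurePreserving_add_right volume c
    have hpre : (fun x : ℝ => x + c) ⁻¹' Set.Ico (c - L) (c + L) = Set.Ico (-L) L := by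
      ext x
      simp only [Set.mem_preimage, Set.mem_Ico]
      constructor <;> intro h <;> exact ⟨by linarith [h.1, h.2], by linarith [h.1, h.2]⟩
    have := hmp.setLIntegral_comp_preimage (measurableSet_Ico (a := c - L) (b := c + L))
      (f := fun s => min 1 (ENNReal.ofReal ε / ENNReal.ofReal |s - c|)) ?_
    · rw [← this, hpre]
      congr 1
      ext x
      simp
    · apply Measurable.min measurable_const
      apply Measurable.div measurable_const
      exact ENNReal.measurable_ofReal.comp (continuous_abs.measurable.comp
        (measurable_id.sub_const c))
  rw [htr]
  have hsplit : ∫⁻ s in Set.Ico (-L) L, min 1 (ENNReal.ofReal ε / ENNReal.ofReal |s|)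
      ≤ (∫⁻ s in Set.Ico (-L) 0, min 1 (ENNReal.ofReal ε / ENNReal.ofReal |s|))
        + ∫⁻ s in Set.Ico 0 L, min 1 (ENNReal.ofReal ε / ENNReal.ofReal |s|) := by
    rw [← Set.Ico_union_Ico_eq_Ico (by linarith : (-L : ℝ) ≤ 0) (by linarith : (0:ℝ) ≤ L)]
    exact lintegral_union_le _ _ _
  have hpos : ∫⁻ s in Set.Ico 0 L, min 1 (ENNReal.ofReal ε / ENNReal.ofReal |s|)
      ≤ ENNReal.ofReal (ε + ε * Real.log (L / ε)) := by
    have : ∫⁻ s in Set.Ico 0 L, min 1 (ENNReal.ofReal ε / ENNReal.ofReal |s|)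
        = ∫⁻ s in Set.Ico 0 L, min 1 (ENNReal.ofReal ε / ENNReal.ofReal s) := by
      refine setLIntegral_congr_fun measurableSet_Ico ?_
      intro s hs
      beta_reduce
      rw [abs_of_nonneg hs.1]
    rw [this]; exact b00 hε hεL
  have hneg : ∫⁻ s in Set.Ico (-L) 0, min 1 (ENNReal.ofReal ε / ENNReal.ofReal |s|)
      ≤ ENNReal.ofReal (ε + ε * Real.log (L / ε)) := by
    have hmp : MeasurePreserving (fun x : ℝ => -x) volume volume :=
      Measure.measurePreserving_neg volume
    have hpre : (fun x : ℝ => -x) ⁻¹' Set.Ico (-L) 0 = Set.Ioc 0 L := by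
      ext x
      simp only [Set.mem_preimage, Set.mem_Ico, Set.mem_Ioc]
      constructor <;> intro h <;> exact ⟨by linarith [h.1, h.2], by linarith [h.1, h.2]⟩
    have hme : Measurable fun s : ℝ => min 1 (ENNReal.ofReal ε / ENNReal.ofReal |s|) := by
      apply Measurable.min measurable_const
      apply Measurable.div measurable_const
      exact ENNReal.measurable_ofReal.comp continuous_abs.measurable
    have := hmp.setLIntegral_comp_preimage (measurableSet_Ico (a := -L) (b := 0))
      (f := fun s => min 1 (ENNReal.ofReal ε / ENNReal.ofReal |s|)) hme
    rw [← this, hpre]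
    have habs : ∫⁻ s in Set.Ioc (0:ℝ) L, min 1 (ENNReal.ofReal ε / ENNReal.ofReal |-s|)
        = ∫⁻ s in Set.Ico (0:ℝ) L, min 1 (ENNReal.ofReal ε / ENNReal.ofReal s) := by
      rw [setLIntegral_congr ((Ioo_ae_eq_Ioc (μ := volume) (a := (0:ℝ)) (b := L)).symm.trans
        Ioo_ae_eq_Ico)]
      refine setLIntegral_congr_fun measurableSet_Ico ?_
      intro s hs
      beta_reduce
      rw [abs_neg, abs_of_nonneg hs.1]
    rw [habs]
    exact b00 hε hεL
  calc _ ≤ _ := hsplit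
    _ ≤ ENNReal.ofReal (ε + ε * Real.log (L / ε)) + ENNReal.ofReal (ε + ε * Real.log (L / ε)) :=
        add_le_add hneg hpos
    _ = ENNReal.ofReal (2 * (ε + ε * Real.log (L / ε))) := by
        have h0 : 0 ≤ ε + ε * Real.log (L / ε) := by
          have := Real.log_nonneg ((one_le_div hε).2 hεL)
          nlinarith
        rw [← ENNReal.ofReal_add h0 h0, two_mul]

/-- Lower bound for `|sin 4πb|` near a quarter-integer. -/
lemma sin_quarter (m : ℤ) (b : ℝ) (h : |b - m / 4| ≤ 1 / 8) :
    8 * |b - m / 4| ≤ |Real.sin (4 * π * b)| := by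
  have hπ : (0 : ℝ) < π := Real.pi_pos
  have he : 4 * π * b - m * π = 4 * π * (b - m / 4) := by ring
  have h2 : |4 * π * b - m * π| ≤ π / 2 := by
    rw [he, abs_mul, abs_of_pos (by positivity : (0:ℝ) < 4 * π)]
    nlinarith
  have := abs_sin_ge (4 * π * b) m h2
  rw [he, abs_mul, abs_of_pos (by positivity : (0:ℝ) < 4 * π)] at this
  have heq : 2 / π * (4 * π * |b - m / 4|) = 8 * |b - m / 4| := by
    field_simp
    ring
  linarith [heq ▸ this]

/-- The measure of the slice in `x` for fixed `b`. -/
lemma slice_bound (n₀ n₁ : ℝ) (hn : n₀ ^ 2 + n₁ ^ 2 = 1) {δ : ℝ} (hδ : 0 < δ) (b : ℝ) :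
    volume {x : ℝ | x ∈ Set.Ico (0 : ℝ) 1 ∧
        |n₀ * Real.sin (2 * π * (x + b)) + n₁ * Real.sin (2 * π * (x - b))| < δ}
      ≤ min 1 (ENNReal.ofReal (2 * Real.sqrt 2 * δ) / ENNReal.ofReal |Real.sin (4 * π * b)|) := by
  have hπ : (0 : ℝ) < π := Real.pi_pos
  set A : ℝ := (n₀ + n₁) * Real.cos (2 * π * b) with hA
  set B : ℝ := (n₀ - n₁) * Real.sin (2 * π * b) with hB
  have hf : ∀ x : ℝ, n₀ * Real.sin (2 * π * (x + b)) + n₁ * Real.sin (2 * π * (x - b))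
      = A * Real.sin (2 * π * x) + B * Real.cos (2 * π * x) := by
    intro x
    have h1 : 2 * π * (x + b) = 2 * π * x + 2 * π * b := by ring
    have h2 : 2 * π * (x - b) = 2 * π * x - 2 * π * b := by ring
    rw [h1, h2, Real.sin_add, Real.sin_sub, hA, hB]
    ring
  have hpy : Real.sin (2 * π * b) ^ 2 + Real.cos (2 * π * b) ^ 2 = 1 :=
    Real.sin_sq_add_cos_sq _
  have hcos2 : Real.cos (4 * π * b) = Real.cos (2 * π * b) ^ 2 - Real.sin (2 * π * b) ^ 2 := by
    have : (4 : ℝ) * π * b = 2 * (2 * π * b) := by ring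
    rw [this, Real.cos_two_mul]
    nlinarith
  have hR2 : A ^ 2 + B ^ 2 = 1 + 2 * n₀ * n₁ * Real.cos (4 * π * b) := by
    rw [hA, hB, hcos2]
    nlinarith
  have hpy4 : Real.sin (4 * π * b) ^ 2 + Real.cos (4 * π * b) ^ 2 = 1 :=
    Real.sin_sq_add_cos_sq _
  have hRs : Real.sin (4 * π * b) ^ 2 / 2 ≤ A ^ 2 + B ^ 2 := by
    rw [hR2]
    have hc1 : Real.cos (4 * π * b) ≤ 1 := Real.cos_le_one _
    have hc2 : -1 ≤ Real.cos (4 * π * b) := Real.neg_one_le_cos _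
    nlinarith [sq_nonneg (n₀ - n₁), sq_nonneg (n₀ + n₁),
      sq_nonneg (1 - Real.cos (4 * π * b)), sq_nonneg (1 + Real.cos (4 * π * b)),
      sq_nonneg (n₀ + n₁ + (n₀ - n₁) * Real.cos (4 * π * b)),
      sq_nonneg (n₀ - n₁ + (n₀ + n₁) * Real.cos (4 * π * b))]
  by_cases hz : Real.sin (4 * π * b) = 0
  · -- RHS equals 1
    have hnum : ENNReal.ofReal (2 * Real.sqrt 2 * δ) ≠ 0 := by
      simp only [ne_eq, ENNReal.ofReal_eq_zero, not_le]
      positivity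
    rw [hz]
    simp only [abs_zero, ENNReal.ofReal_zero, ENNReal.div_zero hnum]
    rw [min_eq_left le_top]
    calc volume _ ≤ volume (Set.Ico (0:ℝ) 1) := measure_mono (fun x hx => hx.1)
      _ = 1 := by rw [Real.volume_Ico]; norm_num
  · have hsq : 0 < Real.sin (4 * π * b) ^ 2 := by positivity
    have hABpos : 0 < A ^ 2 + B ^ 2 := by nlinarith
    set R : ℝ := Real.sqrt (A ^ 2 + B ^ 2) with hRdef
    have hRpos : 0 < R := Real.sqrt_pos.2 hABpos
    set z : ℂ := (A : ℂ) + (B : ℂ) * Complex.I with hzdef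
    have habs : ‖z‖ = R := by
      rw [hzdef, Complex.norm_def, Complex.normSq_add_mul_I]
    have hz0 : z ≠ 0 := by
      intro h
      rw [h] at habs
      simp at habs
      exact hRpos.ne' habs.symm
    set φ : ℝ := Complex.arg z with hφdef
    have hcosφ : Real.cos φ = A / R := by
      rw [hφdef, Complex.cos_arg hz0, habs]
      simp [hzdef]
    have hsinφ : Real.sin φ = B / R := by
      rw [hφdef, Complex.sin_arg, habs]
      simp [hzdef]
    have hfR : ∀ x : ℝ, A * Real.sin (2 * π * x) + B * Real.cos (2 * π * x)
        = R * Real.sin (2 * π * x + φ) := by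
      intro x
      rw [Real.sin_add, hcosφ, hsinφ]
      field_simp
    have hseteq : {x : ℝ | x ∈ Set.Ico (0 : ℝ) 1 ∧
        |n₀ * Real.sin (2 * π * (x + b)) + n₁ * Real.sin (2 * π * (x - b))| < δ}
        = {x : ℝ | x ∈ Set.Ico (0 : ℝ) 1 ∧ |Real.sin (2 * π * x + φ)| < δ / R} := by
      ext x
      simp only [Set.mem_setOf_eq, and_congr_right_iff]
      intro _
      rw [hf x, hfR x, abs_mul, abs_of_pos hRpos, ← lt_div_iff₀' hRpos]
    rw [hseteq]
    refine le_min ?_ ?_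
    · calc volume _ ≤ volume (Set.Ico (0:ℝ) 1) := measure_mono (fun x hx => hx.1)
        _ = 1 := by rw [Real.volume_Ico]; norm_num
    · have hmain : volume {x : ℝ | x ∈ Set.Ico (0 : ℝ) 1 ∧ |Real.sin (2 * π * x + φ)| < δ / R}
          ≤ ENNReal.ofReal (2 * (δ / R)) := sine_sublevel φ _ (by positivity)
      refine hmain.trans ?_
      have hsin_pos : 0 < |Real.sin (4 * π * b)| := abs_pos.2 hz
      have h4 : Real.sqrt (Real.sin (4 * π * b) ^ 2 / 2)
          = |Real.sin (4 * π * b)| / Real.sqrt 2 := by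
        rw [Real.sqrt_div (sq_nonneg _), Real.sqrt_sq_eq_abs]
      have hRlow : |Real.sin (4 * π * b)| / Real.sqrt 2 ≤ R := by
        rw [hRdef, ← h4]
        exact Real.sqrt_le_sqrt hRs
      have hbpos : 0 < |Real.sin (4 * π * b)| / Real.sqrt 2 := by positivity
      have hkey : 2 * (δ / R) ≤ 2 * Real.sqrt 2 * δ / |Real.sin (4 * π * b)| := by
        have h2 : 2 * δ / R ≤ 2 * δ / (|Real.sin (4 * π * b)| / Real.sqrt 2) := by
          rw [div_le_div_iff₀ hRpos hbpos]
          exact mul_le_mul_of_nonneg_left hRlow (by positivity)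
        have h3 : 2 * δ / (|Real.sin (4 * π * b)| / Real.sqrt 2)
            = 2 * Real.sqrt 2 * δ / |Real.sin (4 * π * b)| := by
          rw [div_div_eq_mul_div]
          ring
        calc 2 * (δ / R) = 2 * δ / R := by ring
          _ ≤ _ := h2
          _ = _ := h3
      refine (ENNReal.ofReal_le_ofReal hkey).trans ?_
      rw [ENNReal.ofReal_div_of_pos hsin_pos]

/-- Pointwise comparison of the slice bound with the window integrand. -/
lemma F_le {δ : ℝ} (hδ : 0 < δ) (m : ℤ) {c b : ℝ} (hc : c = m / 4) (hb : |b - c| ≤ 1 / 8) :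
    min 1 (ENNReal.ofReal (2 * Real.sqrt 2 * δ) / ENNReal.ofReal |Real.sin (4 * π * b)|)
      ≤ min 1 (ENNReal.ofReal (Real.sqrt 2 * δ / 4) / ENNReal.ofReal |b - c|) := by
  rcases eq_or_lt_of_le (abs_nonneg (b - c)) with hd | hd
  · -- |b - c| = 0, RHS = 1
    rw [← hd]
    have hnum : ENNReal.ofReal (Real.sqrt 2 * δ / 4) ≠ 0 := by
      simp only [ne_eq, ENNReal.ofReal_eq_zero, not_le]
      positivity
    simp only [ENNReal.ofReal_zero, ENNReal.div_zero hnum]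
    rw [min_eq_left le_top]
    exact min_le_left _ _
  · have hsin : 8 * |b - c| ≤ |Real.sin (4 * π * b)| := by
      rw [hc] at hb ⊢
      exact sin_quarter m b hb
    have hsinpos : 0 < |Real.sin (4 * π * b)| := lt_of_lt_of_le (by positivity) hsin
    refine min_le_min le_rfl ?_
    rw [← ENNReal.ofReal_div_of_pos hsinpos, ← ENNReal.ofReal_div_of_pos hd]
    apply ENNReal.ofReal_le_ofReal
    rw [div_le_div_iff₀ hsinpos hd]
    calc 2 * Real.sqrt 2 * δ * |b - c| = (Real.sqrt 2 * δ / 4) * (8 * |b - c|) := by ring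
      _ ≤ (Real.sqrt 2 * δ / 4) * |Real.sin (4 * π * b)| :=
          mul_le_mul_of_nonneg_left hsin (by positivity)
      _ = Real.sqrt 2 * δ / 4 * |Real.sin (4 * π * b)| := by ring

set_option maxHeartbeats 2000000 in
theorem jacobian_small_set_measure :
    ∃ C : ℝ, ∀ n : Fin 2 → ℝ, n 0 ^ 2 + n 1 ^ 2 = 1 → ∀ δ : ℝ, 0 < δ → δ ≤ 1 / 3 →
      volume {u ∈ box2 |
          |n 0 * Real.sin (2 * Real.pi * (u 0 + u 1)) +
            n 1 * Real.sin (2 * Real.pi * (u 0 - u 1))| < δ}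
        ≤ ENNReal.ofReal (C * δ * |Real.log δ|) := by
  refine ⟨8, fun n hn δ hδ hδ3 => ?_⟩
  have hπ : (0 : ℝ) < π := Real.pi_pos
  have hsqrt2 : Real.sqrt 2 ≤ 3 / 2 := by
    nlinarith [Real.sq_sqrt (by norm_num : (0:ℝ) ≤ 2), Real.sqrt_nonneg 2]
  have hsqrt2' : 1 ≤ Real.sqrt 2 := by
    nlinarith [Real.sq_sqrt (by norm_num : (0:ℝ) ≤ 2), Real.sqrt_nonneg 2]
  set ε : ℝ := Real.sqrt 2 * δ / 4 with hε_def
  have hεpos : 0 < ε := by positivity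
  have hεL : ε ≤ 1 / 8 := by
    rw [hε_def]
    nlinarith
  -- the set in product form
  set T : Set (ℝ × ℝ) := {p : ℝ × ℝ | (p.2 ∈ Set.Ico (0:ℝ) 1 ∧ p.1 ∈ Set.Ico (0:ℝ) 1) ∧
      |n 0 * Real.sin (2 * π * (p.2 + p.1)) + n 1 * Real.sin (2 * π * (p.2 - p.1))| < δ}
    with hT
  have hTm : MeasurableSet T := by
    have h1 : MeasurableSet {p : ℝ × ℝ | p.2 ∈ Set.Ico (0:ℝ) 1} :=
      measurable_snd measurableSet_Ico
    have h2 : MeasurableSet {p : ℝ × ℝ | p.1 ∈ Set.Ico (0:ℝ) 1} :=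
      measurable_fst measurableSet_Ico
    have hcont : Continuous fun p : ℝ × ℝ =>
        |n 0 * Real.sin (2 * π * (p.2 + p.1)) + n 1 * Real.sin (2 * π * (p.2 - p.1))| := by
      fun_prop
    have h3 : MeasurableSet {p : ℝ × ℝ |
        |n 0 * Real.sin (2 * π * (p.2 + p.1)) + n 1 * Real.sin (2 * π * (p.2 - p.1))| < δ} :=
      measurableSet_lt hcont.measurable measurable_const
    exact (h1.inter h2).inter h3
  -- measure preserving transfer
  have h1mp : MeasurePreserving (MeasurableEquiv.finTwoArrow : (Fin 2 → ℝ) ≃ᵐ (ℝ × ℝ))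
      volume volume := volume_preserving_finTwoArrow ℝ
  have h2mp : MeasurePreserving (Prod.swap : ℝ × ℝ → ℝ × ℝ) volume volume := by
    rw [Measure.volume_eq_prod]
    exact Measure.measurePreserving_swap
  have hqmp : MeasurePreserving (fun u : Fin 2 → ℝ => ((u 1, u 0) : ℝ × ℝ)) volume volume := by
    have := h2mp.comp h1mp
    have hfun : (Prod.swap ∘ (MeasurableEquiv.finTwoArrow : (Fin 2 → ℝ) ≃ᵐ ℝ × ℝ))
        = fun u : Fin 2 → ℝ => ((u 1, u 0) : ℝ × ℝ) := by
      funext u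
      simp [MeasurableEquiv.finTwoArrow]
    rwa [hfun] at this
  have hSeq : {u ∈ box2 |
      |n 0 * Real.sin (2 * Real.pi * (u 0 + u 1)) +
        n 1 * Real.sin (2 * Real.pi * (u 0 - u 1))| < δ}
      = (fun u : Fin 2 → ℝ => ((u 1, u 0) : ℝ × ℝ)) ⁻¹' T := by
    ext u
    simp only [Set.mem_setOf_eq, Set.mem_preimage, hT, box2, Set.mem_pi, Set.mem_univ,
      forall_true_left]
    constructor
    · rintro ⟨hb, hlt⟩
      exact ⟨⟨hb 0, hb 1⟩, hlt⟩
    · rintro ⟨⟨h0, h1⟩, hlt⟩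
      refine ⟨?_, hlt⟩
      intro i
      fin_cases i <;> assumption
  rw [hSeq, hqmp.measure_preimage hTm.nullMeasurableSet]
  rw [Measure.volume_eq_prod, Measure.prod_apply hTm]
  -- slice bound
  set G : ℝ → ℝ≥0∞ := fun b =>
    min 1 (ENNReal.ofReal (2 * Real.sqrt 2 * δ) / ENNReal.ofReal |Real.sin (4 * π * b)|)
    with hG
  have hslice : ∀ b : ℝ, volume (Prod.mk b ⁻¹' T) ≤ (Set.Ico (0:ℝ) 1).indicator G b := by
    intro b
    by_cases hb : b ∈ Set.Ico (0:ℝ) 1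
    · rw [Set.indicator_of_mem hb]
      have hpre : Prod.mk b ⁻¹' T = {x : ℝ | x ∈ Set.Ico (0 : ℝ) 1 ∧
          |n 0 * Real.sin (2 * π * (x + b)) + n 1 * Real.sin (2 * π * (x - b))| < δ} := by
        ext x
        simp only [Set.mem_preimage, hT, Set.mem_setOf_eq]
        tauto
      rw [hpre]
      exact slice_bound (n 0) (n 1) hn hδ b
    · rw [Set.indicator_of_notMem hb]
      have hpre : Prod.mk b ⁻¹' T = ∅ := by
        ext x
        simp only [Set.mem_preimage, hT, Set.mem_setOf_eq, Set.mem_empty_iff_false, iff_false]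
        rintro ⟨⟨_, hbmem⟩, _⟩
        exact hb hbmem
      rw [hpre]
      simp
  have hstep1 : ∫⁻ b, volume (Prod.mk b ⁻¹' T) ≤ ∫⁻ b in Set.Ico (0:ℝ) 1, G b := by
    rw [← lintegral_indicator measurableSet_Ico]
    exact lintegral_mono hslice
  -- cover [0,1) by five windows
  have hcover : Set.Ico (0:ℝ) 1 ⊆
      Set.Ico ((0:ℝ) - 1/8) ((0:ℝ) + 1/8) ∪ (Set.Ico ((1/4:ℝ) - 1/8) ((1/4:ℝ) + 1/8) ∪
        (Set.Ico ((1/2:ℝ) - 1/8) ((1/2:ℝ) + 1/8) ∪ (Set.Ico ((3/4:ℝ) - 1/8) ((3/4:ℝ) + 1/8) ∪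
          Set.Ico ((1:ℝ) - 1/8) ((1:ℝ) + 1/8)))) := by
    rintro b ⟨hb0, hb1⟩
    rcases lt_or_ge b (1/8) with h | h
    · exact Or.inl ⟨by linarith, by linarith⟩
    rcases lt_or_ge b (3/8) with h2 | h2
    · exact Or.inr (Or.inl ⟨by linarith, by linarith⟩)
    rcases lt_or_ge b (5/8) with h3 | h3
    · exact Or.inr (Or.inr (Or.inl ⟨by linarith, by linarith⟩))
    rcases lt_or_ge b (7/8) with h4 | h4
    · exact Or.inr (Or.inr (Or.inr (Or.inl ⟨by linarith, by linarith⟩)))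
    · exact Or.inr (Or.inr (Or.inr (Or.inr ⟨by linarith, by linarith⟩)))
  have hwin : ∀ (c : ℝ) (m : ℤ), c = m / 4 →
      ∫⁻ b in Set.Ico (c - 1/8) (c + 1/8), G b
        ≤ ENNReal.ofReal (2 * (ε + ε * Real.log ((1/8) / ε))) := by
    intro c m hc
    have hmono : ∫⁻ b in Set.Ico (c - 1/8) (c + 1/8), G b
        ≤ ∫⁻ b in Set.Ico (c - 1/8) (c + 1/8),
            min 1 (ENNReal.ofReal ε / ENNReal.ofReal |b - c|) := by
      refine setLIntegral_mono' measurableSet_Ico fun b hb => ?_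
      have habs : |b - c| ≤ 1/8 := by
        rw [abs_le]
        exact ⟨by linarith [hb.1], by linarith [hb.2]⟩
      exact F_le hδ m hc habs
    exact hmono.trans (bwin c hεpos hεL)
  have hchain : ∫⁻ b in Set.Ico (0:ℝ) 1, G b
      ≤ ENNReal.ofReal (2 * (ε + ε * Real.log ((1/8) / ε)))
        + (ENNReal.ofReal (2 * (ε + ε * Real.log ((1/8) / ε)))
        + (ENNReal.ofReal (2 * (ε + ε * Real.log ((1/8) / ε)))
        + (ENNReal.ofReal (2 * (ε + ε * Real.log ((1/8) / ε)))
        + ENNReal.ofReal (2 * (ε + ε * Real.log ((1/8) / ε)))))) := by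
    refine (lintegral_mono_set hcover).trans ?_
    refine (lintegral_union_le _ _ _).trans ?_
    refine add_le_add (hwin 0 0 (by norm_num)) ?_
    refine (lintegral_union_le _ _ _).trans ?_
    refine add_le_add (hwin (1/4) 1 (by norm_num)) ?_
    refine (lintegral_union_le _ _ _).trans ?_
    refine add_le_add (hwin (1/2) 2 (by norm_num)) ?_
    refine (lintegral_union_le _ _ _).trans ?_
    exact add_le_add (hwin (3/4) 3 (by norm_num)) (hwin 1 4 (by norm_num))
  -- final arithmetic
  have hX0 : 0 ≤ Real.log ((1/8) / ε) := Real.log_nonneg ((one_le_div hεpos).2 hεL)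
  have hδ1 : δ < 1 := by linarith
  have hlogneg : Real.log δ < 0 := Real.log_neg hδ hδ1
  have habslog : |Real.log δ| = -Real.log δ := abs_of_neg hlogneg
  have hXle : Real.log ((1/8) / ε) ≤ |Real.log δ| := by
    have h8ε : δ ≤ 8 * ε := by
      rw [hε_def]; nlinarith
    have hle : (1/8 : ℝ) / ε ≤ 1 / δ := by
      rw [div_le_div_iff₀ hεpos hδ]
      nlinarith
    have := Real.log_le_log (by positivity) hle
    rw [Real.log_div one_ne_zero (ne_of_gt hδ), Real.log_one] at this
    rw [habslog]
    linarith
  have h1log : 1 ≤ |Real.log δ| := by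
    rw [habslog]
    have h3 : (3:ℝ) ≤ 1 / δ := by
      rw [le_div_iff₀ hδ]; linarith
    have hl3 : (1:ℝ) < Real.log 3 := by
      rw [Real.lt_log_iff_exp_lt (by norm_num)]
      have := Real.exp_one_lt_d9
      linarith
    have := Real.log_le_log (by norm_num) h3
    rw [Real.log_div one_ne_zero (ne_of_gt hδ), Real.log_one] at this
    linarith
  have hfinal : 2 * (ε + ε * Real.log ((1/8) / ε)) * 5 ≤ 8 * δ * |Real.log δ| := by
    have hε38 : ε ≤ 3 / 8 * δ := by
      rw [hε_def]; nlinarith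
    have k1 : ε * Real.log ((1/8) / ε) ≤ ε * |Real.log δ| :=
      mul_le_mul_of_nonneg_left hXle hεpos.le
    have k2 : ε ≤ ε * |Real.log δ| := le_mul_of_one_le_right hεpos.le h1log
    have k3 : ε * |Real.log δ| ≤ 3 / 8 * δ * |Real.log δ| :=
      mul_le_mul_of_nonneg_right hε38 (abs_nonneg _)
    have k4 : 0 ≤ δ * |Real.log δ| := mul_nonneg hδ.le (abs_nonneg _)
    nlinarith
  calc ∫⁻ b, volume (Prod.mk b ⁻¹' T) ≤ _ := hstep1
    _ ≤ _ := hchain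
    _ = ENNReal.ofReal (2 * (ε + ε * Real.log ((1/8) / ε)) * 5) := by
        have hnn : 0 ≤ 2 * (ε + ε * Real.log ((1/8) / ε)) := by nlinarith
        rw [← ENNReal.ofReal_add hnn hnn, ← ENNReal.ofReal_add hnn (by linarith),
          ← ENNReal.ofReal_add hnn (by linarith), ← ENNReal.ofReal_add hnn (by linarith)]
        congr 1
        ring
    _ ≤ ENNReal.ofReal (8 * δ * |Real.log δ|) := ENNReal.ofReal_le_ofReal hfinal

end Helpers
end

section
/- There exists a constant C < ∞ such that for every ε with 0 < ε ≤ 1/3 and every γ ∈ I, one has ∫_{[0,1)³} |e(p) − γ − iε|^{−3/2} dp ≤ C·ε^{−1/2}·|log ε|^{3/2}; equivalently, (∫_{[0,1)³} |e(p) − γ − iε|^{−3/2} dp)^{2/3} ≤ C′·ε^{−1/3}·|log ε| for a constant C′. -/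
open MeasureTheory Real

/-- The lattice dispersion relation `e(k) = 3 - cos(2πk₁) - cos(2πk₂) - cos(2πk₃)`. -/
noncomputable def disp (k : Fin 3 → ℝ) : ℝ := 3 - ∑ i, Real.cos (2 * Real.pi * k i)

/-- The boundary of the rectangle in `ℂ` with vertices `-1, 7, 7-i, -1-i`. -/
def RectI : Set ℂ := {α | -1 ≤ α.re ∧ α.re ≤ 7 ∧ -1 ≤ α.im ∧ α.im ≤ 0 ∧
  (α.re = -1 ∨ α.re = 7 ∨ α.im = -1 ∨ α.im = 0)}

/-- The fundamental domain `[0,1)³` of the torus. -/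
def box3 : Set (Fin 3 → ℝ) := Set.univ.pi fun _ => Set.Ico (0 : ℝ) 1

open Set
open scoped ENNReal


noncomputable def nu : Measure ℝ := volume.restrict (Set.Ico (0:ℝ) 1)

instance : IsFiniteMeasure nu := by
  constructor
  rw [nu, Measure.restrict_apply_univ, Real.volume_Ico]
  norm_num

lemma nu_univ : nu Set.univ = 1 := by
  rw [nu, Measure.restrict_apply_univ, Real.volume_Ico]
  norm_num

lemma antitone_arccos : Antitone Real.arccos := by
  intro u v huv
  simp only [Real.arccos]
  have := Real.monotone_arcsin huv
  linarith

lemma arccos_sub_le_sqrt {A B : ℝ} (hA : -1 ≤ A) (hAB : A ≤ B) (hB : B ≤ 1) :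
    Real.arccos A - Real.arccos B ≤ π * Real.sqrt ((B - A) / 2) := by
  set θ₁ := Real.arccos B with hθ₁
  set θ₂ := Real.arccos A with hθ₂
  have hθ₁0 : 0 ≤ θ₁ := Real.arccos_nonneg B
  have hθ₂π : θ₂ ≤ π := Real.arccos_le_pi A
  have h12 : θ₁ ≤ θ₂ := _root_.antitone_arccos hAB
  set m := θ₂ - θ₁ with hm
  have hm0 : 0 ≤ m := by simp [hm]; linarith
  have hmπ : m ≤ π := by simp [hm]; linarith
  have hpi : (0:ℝ) < π := Real.pi_pos
  have hBA : B - A = 2 * Real.sin ((θ₁ + θ₂)/2) * Real.sin (m/2) := by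
    have hc : Real.cos θ₁ - Real.cos θ₂ = B - A := by
      rw [hθ₁, hθ₂, Real.cos_arccos (by linarith) hB, Real.cos_arccos hA (by linarith)]
    rw [← hc, Real.cos_sub_cos]
    have h2 : (θ₁ - θ₂)/2 = -(m/2) := by rw [hm]; ring
    rw [h2, Real.sin_neg]; ring
  have h1 : m / π ≤ Real.sin (m/2) := by
    have := Real.mul_le_sin (x := m/2) (by linarith) (by linarith)
    calc m/π = 2/π*(m/2) := by ring
    _ ≤ _ := this
  have h2 : m / π ≤ Real.sin ((θ₁+θ₂)/2) := by
    rcases le_or_gt ((θ₁+θ₂)/2) (π/2) with hc | hc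
    · have hj := Real.mul_le_sin (x := (θ₁+θ₂)/2) (by linarith) hc
      calc m/π = 2/π*(m/2) := by ring
      _ ≤ 2/π*((θ₁+θ₂)/2) := by
          have h2π : (0:ℝ) ≤ 2/π := by positivity
          have : m/2 ≤ (θ₁+θ₂)/2 := by simp [hm]; linarith
          nlinarith
      _ ≤ _ := hj
    · have hs : Real.sin ((θ₁+θ₂)/2) = Real.sin (π - (θ₁+θ₂)/2) := (Real.sin_pi_sub _).symm
      have hj := Real.mul_le_sin (x := π - (θ₁+θ₂)/2) (by linarith) (by linarith)
      rw [hs]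
      have hle : m/2 ≤ π - (θ₁+θ₂)/2 := by simp [hm]; linarith
      calc m/π = 2/π * (m/2) := by ring
      _ ≤ 2/π * (π - (θ₁+θ₂)/2) := by
          have h2π : (0:ℝ) ≤ 2/π := by positivity
          nlinarith
      _ ≤ _ := hj
  have hmn : 0 ≤ m/π := by positivity
  have key : (m/π)^2 * 2 ≤ B - A := by nlinarith
  have h3 : m^2 ≤ π^2 * ((B-A)/2) := by
    have hπ2 : (0:ℝ) < π^2 := by positivity
    have hk : (m/π)^2 = m^2/π^2 := by field_simp
    rw [hk] at key
    have := (div_le_iff₀ hπ2).1 (by linarith : m^2/π^2 ≤ (B-A)/2)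
    nlinarith
  have hgoal : θ₂ - θ₁ ≤ π * Real.sqrt ((B-A)/2) := by
    calc θ₂ - θ₁ = m := by rw [hm]
    _ = Real.sqrt (m^2) := (Real.sqrt_sq hm0).symm
    _ ≤ Real.sqrt (π^2 * ((B-A)/2)) := Real.sqrt_le_sqrt h3
    _ = π * Real.sqrt ((B-A)/2) := by
        rw [Real.sqrt_mul (by positivity), Real.sqrt_sq hpi.le]
  exact hgoal

lemma arccos_sub_le_lin {A B δ : ℝ} (hA : -1 ≤ A) (hAB : A ≤ B) (hB : B ≤ 1)
    (hδ : 0 < δ) (hmax : max |A| |B| ≤ 1 - δ) :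
    Real.arccos A - Real.arccos B ≤ π * (B - A) / (2 * Real.sqrt δ) := by
  set θ₁ := Real.arccos B with hθ₁
  set θ₂ := Real.arccos A with hθ₂
  have hθ₁0 : 0 ≤ θ₁ := Real.arccos_nonneg B
  have hθ₂π : θ₂ ≤ π := Real.arccos_le_pi A
  have h12 : θ₁ ≤ θ₂ := _root_.antitone_arccos hAB
  set m := θ₂ - θ₁ with hm
  have hm0 : 0 ≤ m := by simp [hm]; linarith
  have hmπ : m ≤ π := by simp [hm]; linarith
  have hpi : (0:ℝ) < π := Real.pi_pos
  have hBA : B - A = 2 * Real.sin ((θ₁ + θ₂)/2) * Real.sin (m/2) := by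
    have hc : Real.cos θ₁ - Real.cos θ₂ = B - A := by
      rw [hθ₁, hθ₂, Real.cos_arccos (by linarith) hB, Real.cos_arccos hA (by linarith)]
    rw [← hc, Real.cos_sub_cos]
    have h2 : (θ₁ - θ₂)/2 = -(m/2) := by rw [hm]; ring
    rw [h2, Real.sin_neg]; ring
  set mid := (θ₁ + θ₂)/2 with hmid
  have hmid0 : 0 ≤ mid := by simp [hmid]; linarith
  have hmidπ : mid ≤ π := by simp [hmid]; linarith
  have hcosmidB : Real.cos mid ≤ B := by
    have h := Real.cos_le_cos_of_nonneg_of_le_pi hθ₁0 hmidπ (by simp [hmid]; linarith)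
    have : Real.cos θ₁ = B := by rw [hθ₁]; exact Real.cos_arccos (by linarith) hB
    linarith
  have hcosmidA : A ≤ Real.cos mid := by
    have h := Real.cos_le_cos_of_nonneg_of_le_pi hmid0 hθ₂π (by simp [hmid]; linarith)
    have : Real.cos θ₂ = A := by rw [hθ₂]; exact Real.cos_arccos hA (by linarith)
    linarith
  have habs : |Real.cos mid| ≤ 1 - δ := by
    rw [abs_le]
    constructor
    · have : -|A| ≤ A := neg_abs_le A
      have h2 : |A| ≤ 1 - δ := le_trans (le_max_left _ _) hmax
      linarith
    · have : B ≤ |B| := le_abs_self B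
      have h2 : |B| ≤ 1 - δ := le_trans (le_max_right _ _) hmax
      linarith
  have hδ1 : δ ≤ 1 := by
    have : (0:ℝ) ≤ |A| := abs_nonneg A
    have h2 : |A| ≤ 1 - δ := le_trans (le_max_left _ _) hmax
    linarith
  have hsin : Real.sqrt δ ≤ Real.sin mid := by
    have hs0 : 0 ≤ Real.sin mid := Real.sin_nonneg_of_nonneg_of_le_pi hmid0 hmidπ
    have h2 : δ ≤ Real.sin mid ^ 2 := by
      have hsc := Real.sin_sq_add_cos_sq mid
      nlinarith [sq_abs (Real.cos mid), abs_nonneg (Real.cos mid)]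
    calc Real.sqrt δ ≤ Real.sqrt (Real.sin mid ^ 2) := Real.sqrt_le_sqrt h2
    _ = Real.sin mid := Real.sqrt_sq hs0
  have h1 : m / π ≤ Real.sin (m/2) := by
    have := Real.mul_le_sin (x := m/2) (by linarith) (by linarith)
    calc m/π = 2/π*(m/2) := by ring
    _ ≤ _ := this
  have hmn : 0 ≤ m/π := by positivity
  have hsd : 0 < Real.sqrt δ := Real.sqrt_pos.2 hδ
  have key : 2 * Real.sqrt δ * (m/π) ≤ B - A := by nlinarith
  have hgoal : m ≤ π * (B - A) / (2 * Real.sqrt δ) := by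
    rw [le_div_iff₀ (by positivity)]
    have : 2 * Real.sqrt δ * (m/π) * π = m * (2 * Real.sqrt δ) := by field_simp
    nlinarith
  exact hgoal

lemma meas_band (c t : ℝ) (ht : 0 ≤ t) :
    nu {x | |Real.cos (2*π*x) - c| ≤ t} ≤
      ENNReal.ofReal ((Real.arccos (max (c-t) (-1)) - Real.arccos (min (c+t) 1)) / π) := by
  have hpi : (0:ℝ) < π := Real.pi_pos
  set A := max (c-t) (-1) with hA'
  set B := min (c+t) 1 with hB'
  by_cases hne : A ≤ B
  case neg =>
    have hempty : {x : ℝ | |Real.cos (2*π*x) - c| ≤ t} = ∅ := by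
      ext x
      simp only [Set.mem_setOf_eq, Set.mem_empty_iff_false, iff_false]
      intro h
      have h1 : c - t ≤ Real.cos (2*π*x) := by have := (abs_le.1 h).1; linarith
      have h2 : Real.cos (2*π*x) ≤ c + t := by have := (abs_le.1 h).2; linarith
      have h3 := Real.neg_one_le_cos (2*π*x)
      have h4 := Real.cos_le_one (2*π*x)
      exact hne (le_trans (max_le h1 h3) (le_min h2 h4))
    rw [hempty]
    simp
  case pos =>
    have hA1 : -1 ≤ A := le_max_right _ _
    have hB1 : B ≤ 1 := min_le_right _ _
    set l := Real.arccos B / (2*π) with hl'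
    set h := Real.arccos A / (2*π) with hh'
    have harc : Real.arccos B ≤ Real.arccos A := _root_.antitone_arccos hne
    have hlh : l ≤ h := by
      rw [hl', hh']
      apply div_le_div_of_nonneg_right harc ?_ |>.trans_eq rfl
      positivity
    have hsub : ∀ x ∈ Icc (0:ℝ) (1/2), |Real.cos (2*π*x) - c| ≤ t →
        Real.arccos B ≤ 2*π*x ∧ 2*π*x ≤ Real.arccos A := by
      intro x hx hP
      have hθ0 : 0 ≤ 2*π*x := by
        have := hx.1; positivity
      have hθπ : 2*π*x ≤ π := by nlinarith [hx.2]
      have h1 : A ≤ Real.cos (2*π*x) := by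
        refine max_le ?_ (Real.neg_one_le_cos _)
        have := (abs_le.1 hP).1; linarith
      have h2 : Real.cos (2*π*x) ≤ B := by
        refine le_min ?_ (Real.cos_le_one _)
        have := (abs_le.1 hP).2; linarith
      constructor
      · calc Real.arccos B ≤ Real.arccos (Real.cos (2*π*x)) := _root_.antitone_arccos h2
        _ = 2*π*x := Real.arccos_cos hθ0 hθπ
      · calc 2*π*x = Real.arccos (Real.cos (2*π*x)) := (Real.arccos_cos hθ0 hθπ).symm
        _ ≤ Real.arccos A := _root_.antitone_arccos h1
    have hincl : {x | |Real.cos (2*π*x) - c| ≤ t} ∩ Ico (0:ℝ) 1 ⊆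
        Icc l h ∪ Icc (1-h) (1-l) := by
      rintro x ⟨hP, hx0, hx1⟩
      rcases le_or_gt x (1/2) with hhalf | hhalf
      · left
        obtain ⟨ha, hb⟩ := hsub x ⟨hx0, hhalf⟩ hP
        constructor
        · rw [hl', div_le_iff₀ (by positivity)]
          linarith
        · rw [hh', le_div_iff₀ (by positivity)]
          linarith
      · right
        have hx' : 1 - x ∈ Icc (0:ℝ) (1/2) := ⟨by linarith, by linarith⟩
        have hPx' : |Real.cos (2*π*(1-x)) - c| ≤ t := by
          have hc2 : Real.cos (2*π*(1-x)) = Real.cos (2*π*x) := by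
            have he : 2*π*(1-x) = 2*π - 2*π*x := by ring
            rw [he, Real.cos_two_pi_sub]
          rw [hc2]; exact hP
        obtain ⟨ha, hb⟩ := hsub _ hx' hPx'
        constructor
        · have : 1 - x ≤ h := by rw [hh', le_div_iff₀ (by positivity)]; linarith
          linarith
        · have : l ≤ 1 - x := by rw [hl', div_le_iff₀ (by positivity)]; linarith
          linarith
    have hSmeas : MeasurableSet {x : ℝ | |Real.cos (2*π*x) - c| ≤ t} := by
      have hcont : Continuous fun x : ℝ => |Real.cos (2*π*x) - c| :=
        ((Real.continuous_cos.comp (continuous_const.mul continuous_id)).sub continuous_const).abs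
      exact measurableSet_le hcont.measurable measurable_const
    calc nu {x | |Real.cos (2*π*x) - c| ≤ t}
        = volume ({x | |Real.cos (2*π*x) - c| ≤ t} ∩ Ico (0:ℝ) 1) :=
          Measure.restrict_apply hSmeas
      _ ≤ volume (Icc l h ∪ Icc (1-h) (1-l)) := measure_mono hincl
      _ ≤ volume (Icc l h) + volume (Icc (1-h) (1-l)) := measure_union_le _ _
      _ = ENNReal.ofReal (h - l) + ENNReal.ofReal ((1-l) - (1-h)) := by
          rw [Real.volume_Icc, Real.volume_Icc]
      _ = ENNReal.ofReal ((h - l) + (h - l)) := by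
          rw [show (1-l) - (1-h) = h - l by ring, ENNReal.ofReal_add (by linarith) (by linarith)]
      _ = ENNReal.ofReal ((Real.arccos A - Real.arccos B) / π) := by
          congr 1
          rw [hl', hh']
          field_simp
          ring

lemma band_sqrt (c t : ℝ) (ht : 0 ≤ t) :
    nu {x | |Real.cos (2*π*x) - c| ≤ t} ≤ ENNReal.ofReal (Real.sqrt t) := by
  have hpi : (0:ℝ) < π := Real.pi_pos
  refine (meas_band c t ht).trans (ENNReal.ofReal_le_ofReal ?_)
  set A := max (c-t) (-1) with hA'
  set B := min (c+t) 1 with hB'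
  by_cases hne : A ≤ B
  · have hA1 : -1 ≤ A := le_max_right _ _
    have hB1 : B ≤ 1 := min_le_right _ _
    have h := arccos_sub_le_sqrt hA1 hne hB1
    have hBA : B - A ≤ 2*t := by
      have h1 := min_le_left (c+t) 1
      have h2 := le_max_left (c-t) (-1)
      simp only [hA', hB'] at *
      linarith
    have h2 : Real.sqrt ((B - A)/2) ≤ Real.sqrt t := Real.sqrt_le_sqrt (by linarith)
    rw [div_le_iff₀ hpi]
    nlinarith [Real.sqrt_nonneg t]
  · have harc := _root_.antitone_arccos (le_of_not_ge hne)
    have h0 : (Real.arccos A - Real.arccos B)/π ≤ 0 := by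
      apply div_nonpos_of_nonpos_of_nonneg <;> linarith
    exact h0.trans (Real.sqrt_nonneg t)

lemma band_lin (c t : ℝ) (ht : 0 < t) (hd : 0 < min |c-1| |c+1|) :
    nu {x | |Real.cos (2*π*x) - c| ≤ t} ≤
      ENNReal.ofReal (2*t/Real.sqrt (min |c-1| |c+1|)) := by
  have hpi : (0:ℝ) < π := Real.pi_pos
  set d := min |c-1| |c+1| with hd'
  have hsd : 0 < Real.sqrt d := Real.sqrt_pos.2 hd
  rcases le_or_gt (d/2) t with hcase | hcase
  · refine (band_sqrt c t ht.le).trans (ENNReal.ofReal_le_ofReal ?_)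
    have h1 : Real.sqrt d ≤ Real.sqrt (4*t) := Real.sqrt_le_sqrt (by linarith)
    have h2 : Real.sqrt (4*t) = 2*Real.sqrt t := by
      rw [show (4:ℝ)*t = 2^2*t by ring, Real.sqrt_mul (by norm_num : (0:ℝ) ≤ 2^2),
        Real.sqrt_sq (by norm_num : (0:ℝ) ≤ 2)]
    rw [le_div_iff₀ hsd]
    have h3 : Real.sqrt t * Real.sqrt d ≤ Real.sqrt t * (2*Real.sqrt t) := by
      nlinarith [Real.sqrt_nonneg t]
    calc Real.sqrt t * Real.sqrt d ≤ Real.sqrt t * (2*Real.sqrt t) := h3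
    _ = 2*(Real.sqrt t * Real.sqrt t) := by ring
    _ = 2*t := by rw [Real.mul_self_sqrt ht.le]
  · rcases le_or_gt |c| 1 with hc | hc
    · have hdc : d = 1 - |c| := by
        rcases abs_cases c with ⟨h1, h2⟩ | ⟨h1, h2⟩
        · rw [hd', abs_of_nonpos (by linarith : c - 1 ≤ 0),
            abs_of_nonneg (by linarith : (0:ℝ) ≤ c+1), min_eq_left (by linarith)]
          linarith
        · rw [hd', abs_of_nonpos (by linarith : c - 1 ≤ 0),
            abs_of_nonneg (by linarith : (0:ℝ) ≤ c+1), min_eq_right (by linarith)]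
          linarith
      have habsc1 : c ≤ |c| := le_abs_self c
      have habsc2 : -c ≤ |c| := neg_le_abs c
      have hct1 : c + t ≤ 1 := by rw [hdc] at hcase; linarith
      have hct2 : -1 ≤ c - t := by rw [hdc] at hcase; linarith
      refine (meas_band c t ht.le).trans (ENNReal.ofReal_le_ofReal ?_)
      rw [max_eq_left hct2, min_eq_left hct1]
      have hmax : max |c-t| |c+t| ≤ 1 - d/2 := by
        have h1 : |c-t| ≤ |c| + t := by
          calc |c-t| = |c + (-t)| := by ring_nf
          _ ≤ |c| + |(-t)| := abs_add_le _ _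
          _ = |c| + t := by rw [abs_neg, abs_of_pos ht]
        have h2 : |c+t| ≤ |c| + t := by
          calc |c+t| ≤ |c| + |t| := abs_add_le _ _
          _ = |c| + t := by rw [abs_of_pos ht]
        have h3 : |c| + t ≤ 1 - d/2 := by rw [hdc] at hcase ⊢; linarith
        exact max_le (h1.trans h3) (h2.trans h3)
      have h := arccos_sub_le_lin (A := c-t) (B := c+t) (δ := d/2)
        (by linarith) (by linarith) (by linarith) (by linarith) hmax
      have hs2 : Real.sqrt (d/2) > 0 := Real.sqrt_pos.2 (by linarith)
      rw [div_le_iff₀ hpi]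
      have hkey : π * (c+t-(c-t)) / (2 * Real.sqrt (d/2)) ≤ 2*t/Real.sqrt d * π := by
        rw [div_le_iff₀ (by positivity)]
        have hsq1 : Real.sqrt (d/2) ^ 2 = d/2 := Real.sq_sqrt (by linarith)
        have hsq2 : Real.sqrt d ^ 2 = d := Real.sq_sqrt hd.le
        have hsdle : Real.sqrt d ≤ 2 * Real.sqrt (d/2) := by
          nlinarith [hsd.le, hs2.le]
        have hrw : c + t - (c - t) = 2*t := by ring
        rw [hrw]
        have : 2*t/Real.sqrt d * π * (2 * Real.sqrt (d/2)) =
            (2*t) * π * (2 * Real.sqrt (d/2) / Real.sqrt d) := by ring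
        rw [this]
        have h4 : (1:ℝ) ≤ 2 * Real.sqrt (d/2) / Real.sqrt d := by
          rw [le_div_iff₀ hsd]; linarith
        have h5 : 2*t*π*1 ≤ 2*t*π*(2 * Real.sqrt (d/2) / Real.sqrt d) :=
          mul_le_mul_of_nonneg_left h4 (by positivity)
        linarith
      linarith
    · have hdc : d ≤ |c| - 1 := by
        rcases abs_cases c with ⟨h1, h2⟩ | ⟨h1, h2⟩
        · calc d ≤ |c-1| := min_le_left _ _
          _ = c - 1 := abs_of_nonneg (by linarith)
          _ = |c| - 1 := by rw [h1]
        · calc d ≤ |c+1| := min_le_right _ _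
          _ = -(c+1) := abs_of_nonpos (by linarith)
          _ = |c| - 1 := by rw [h1]; ring
      have hempty : {x : ℝ | |Real.cos (2*π*x) - c| ≤ t} = ∅ := by
        ext x
        simp only [Set.mem_setOf_eq, Set.mem_empty_iff_false, iff_false]
        intro hP
        have h1 : c - t ≤ Real.cos (2*π*x) := by have := (abs_le.1 hP).1; linarith
        have h2 : Real.cos (2*π*x) ≤ c + t := by have := (abs_le.1 hP).2; linarith
        have h3 := Real.neg_one_le_cos (2*π*x)
        have h4 := Real.cos_le_one (2*π*x)
        rcases abs_cases c with ⟨he, hc0⟩ | ⟨he, hc0⟩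
        · rw [he] at hdc; linarith
        · rw [he] at hdc; linarith
      rw [hempty]
      simp

lemma kint {ε q u : ℝ} (hε : 0 < ε) (hq : 1 < q) (hu : 0 ≤ u) :
    ∫⁻ r in Set.Ioi u, ENNReal.ofReal ((ε + r) ^ (-q)) =
      ENNReal.ofReal ((ε + u) ^ (1-q) / (q-1)) := by
  set F : ℝ → ℝ := fun r => -((ε + r)^(1-q) / (q-1)) with hF
  have hderiv : ∀ r ∈ Ici u, HasDerivAt F ((ε + r)^(-q)) r := by
    intro r hr
    have hεr : 0 < ε + r := by
      have : u ≤ r := hr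
      linarith
    have h1 : HasDerivAt (fun s : ℝ => ε + s) 1 r := (hasDerivAt_id r).const_add ε
    have h2 : HasDerivAt (fun s : ℝ => (ε + s)^(1-q)) ((1-q)*(ε+r)^(1-q-1)*1) r :=
      (Real.hasDerivAt_rpow_const (Or.inl hεr.ne')).comp r h1
    have h3 := (h2.div_const (q-1)).neg
    have h4 : HasDerivAt F (-((1 - q) * (ε + r) ^ (1 - q - 1) * 1 / (q - 1))) r := h3
    convert h4 using 1
    rw [show (1:ℝ)-q-1 = -q by ring]
    have hq1 : q - 1 ≠ 0 := by linarith
    field_simp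
    ring
  have htendF : Filter.Tendsto F Filter.atTop (nhds 0) := by
    have h1 : Filter.Tendsto (fun r : ℝ => ε + r) Filter.atTop Filter.atTop :=
      Filter.tendsto_atTop_add_const_left _ ε Filter.tendsto_id
    have h2 : Filter.Tendsto (fun r : ℝ => (ε + r)^(1-q)) Filter.atTop (nhds 0) := by
      have := (tendsto_rpow_neg_atTop (by linarith : (0:ℝ) < q - 1)).comp h1
      simpa [Function.comp_def, show -(q-1) = 1 - q by ring] using this
    have := (h2.div_const (q-1)).neg
    simpa using this
  have hnonneg : ∀ r ∈ Ioi u, 0 ≤ (ε + r)^(-q) := by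
    intro r hr
    have : u < r := hr
    exact Real.rpow_nonneg (by linarith) _
  have hint : IntegrableOn (fun r => (ε + r)^(-q)) (Ioi u) :=
    integrableOn_Ioi_deriv_of_nonneg' hderiv hnonneg htendF
  have hval : ∫ r in Ioi u, (ε + r)^(-q) = 0 - F u :=
    integral_Ioi_of_hasDerivAt_of_tendsto' hderiv hint htendF
  rw [← ofReal_integral_eq_lintegral_ofReal hint
    ((ae_restrict_iff' measurableSet_Ioi).2 (Filter.Eventually.of_forall hnonneg))]
  rw [hval, hF]
  norm_num

lemma lint {ε : ℝ} (hε : 0 < ε) :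
    ∫⁻ r in Set.Ioc (0:ℝ) 1, ENNReal.ofReal ((ε + r)⁻¹) =
      ENNReal.ofReal (Real.log (ε+1) - Real.log ε) := by
  have hcont : ContinuousOn (fun r : ℝ => (ε + r)⁻¹) (Icc 0 1) := by
    apply ContinuousOn.inv₀ (continuousOn_const.add continuousOn_id)
    intro x hx
    have := hx.1
    exact (show (0:ℝ) < ε + x by linarith).ne'
  have hint : IntegrableOn (fun r : ℝ => (ε + r)⁻¹) (Ioc 0 1) :=
    (hcont.integrableOn_Icc).mono_set Ioc_subset_Icc_self
  have hval : ∫ r in Ioc (0:ℝ) 1, (ε + r)⁻¹ = Real.log (ε+1) - Real.log ε := by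
    rw [← intervalIntegral.integral_of_le (by norm_num : (0:ℝ) ≤ 1)]
    have h1 : ∫ r in (0:ℝ)..1, (ε + r)⁻¹ = ∫ r in (ε+0)..(ε+1), r⁻¹ :=
      intervalIntegral.integral_comp_add_left (fun r => r⁻¹) ε
    rw [h1, add_zero, integral_inv_of_pos hε (by linarith), Real.log_div (by linarith) hε.ne']
  rw [← ofReal_integral_eq_lintegral_ofReal hint
    ((ae_restrict_iff' measurableSet_Ioc).2 (Filter.Eventually.of_forall ?_)), hval]
  intro r hr
  have := hr.1
  positivity

lemma swap_lem {μ : Measure ℝ} [SigmaFinite μ] {u : ℝ → ℝ} (hu : Measurable u)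
    (h0 : ∀ x, 0 ≤ u x) {k : ℝ → ℝ≥0∞} (hk : Measurable k) :
    ∫⁻ x, (∫⁻ r in Set.Ioi (u x), k r) ∂μ =
      ∫⁻ r in Set.Ioi (0:ℝ), μ {x | u x < r} * k r := by
  have hSmeas : MeasurableSet {p : ℝ × ℝ | u p.1 < p.2} :=
    measurableSet_lt (hu.comp measurable_fst) measurable_snd
  have hmeas : Measurable ({p : ℝ × ℝ | u p.1 < p.2}.indicator (fun p => k p.2)) :=
    (hk.comp measurable_snd).indicator hSmeas
  calc ∫⁻ x, (∫⁻ r in Set.Ioi (u x), k r) ∂μ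
      = ∫⁻ x, (∫⁻ r in Set.Ioi (0:ℝ),
          ({p : ℝ × ℝ | u p.1 < p.2}.indicator (fun p => k p.2)) (x, r)) ∂μ := by
        refine lintegral_congr fun x => ?_
        have heq : ∀ r, ({p : ℝ × ℝ | u p.1 < p.2}.indicator (fun p => k p.2)) (x, r)
            = (Ioi (u x)).indicator k r := by
          intro r
          simp [Set.indicator_apply, Set.mem_setOf_eq, Set.mem_Ioi]
        simp_rw [heq]
        rw [lintegral_indicator measurableSet_Ioi, Measure.restrict_restrict measurableSet_Ioi]
        congr 2
        exact (Set.inter_eq_left.2 (fun r hr => (h0 x).trans_lt hr)).symm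
    _ = ∫⁻ r in Set.Ioi (0:ℝ),
          ∫⁻ x, ({p : ℝ × ℝ | u p.1 < p.2}.indicator (fun p => k p.2)) (x, r) ∂μ :=
        lintegral_lintegral_swap hmeas.aemeasurable
    _ = ∫⁻ r in Set.Ioi (0:ℝ), μ {x | u x < r} * k r := by
        refine lintegral_congr fun r => ?_
        have heq : ∀ x, ({p : ℝ × ℝ | u p.1 < p.2}.indicator (fun p => k p.2)) (x, r)
            = ({x' | u x' < r}).indicator (fun _ => k r) x := by
          intro x
          simp [Set.indicator_apply, Set.mem_setOf_eq]
        simp_rw [heq]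
        have hms : MeasurableSet {x' : ℝ | u x' < r} := hu measurableSet_Iio
        rw [lintegral_indicator_const hms, mul_comm]

lemma fiber_repr {ε q : ℝ} (hε : 0 < ε) (hq : 1 < q) {u : ℝ → ℝ} (hu : Measurable u)
    (h0 : ∀ x, 0 ≤ u x) :
    ∫⁻ x, ENNReal.ofReal ((ε + u x) ^ (1 - q) / (q - 1)) ∂nu
      = ∫⁻ r in Set.Ioi (0:ℝ), nu {x | u x < r} * ENNReal.ofReal ((ε + |r|) ^ (-q)) := by
  have hk : Measurable fun r : ℝ => ENNReal.ofReal ((ε + |r|) ^ (-q)) := by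
    have hcont : Continuous fun r : ℝ => (ε + |r|) ^ (-q) := by
      apply Continuous.rpow_const (continuous_const.add continuous_abs)
      intro r
      left
      exact (show (0:ℝ) < ε + |r| by positivity).ne'
    exact (ENNReal.continuous_ofReal.comp hcont).measurable
  rw [← swap_lem hu h0 hk]
  refine lintegral_congr fun x => ?_
  have h1 : (∫⁻ r in Set.Ioi (u x), ENNReal.ofReal ((ε + |r|) ^ (-q)))
      = ∫⁻ r in Set.Ioi (u x), ENNReal.ofReal ((ε + r) ^ (-q)) := by
    refine setLIntegral_congr_fun measurableSet_Ioi (fun r hr => ?_)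
    simp only [abs_of_pos ((h0 x).trans_lt hr)]
  rw [h1, kint hε hq (h0 x)]

lemma rpow_nhalf {x : ℝ} (hx : 0 ≤ x) : x ^ (-(1:ℝ)/2) = (Real.sqrt x)⁻¹ := by
  rw [Real.sqrt_eq_rpow, ← Real.rpow_neg hx]
  norm_num

lemma Jlem {ε w : ℝ} (hε : 0 < ε) :
    ∫⁻ x, ENNReal.ofReal ((ε + |Real.cos (2*π*x) - w|) ^ (-(3:ℝ)/2)) ∂nu ≤
      ENNReal.ofReal (9 * ε ^ (-(1:ℝ)/2) * (ε + min |w-1| |w+1|) ^ (-(1:ℝ)/2)) := by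
  set u : ℝ → ℝ := fun x => |Real.cos (2*π*x) - w| with hu'
  have hu : Measurable u :=
    (((Real.continuous_cos.comp (continuous_const.mul continuous_id)).sub
      continuous_const).abs).measurable
  have h0 : ∀ x, 0 ≤ u x := fun x => abs_nonneg _
  set d := min |w-1| |w+1| with hd'
  have hd0 : 0 ≤ d := le_min (abs_nonneg _) (abs_nonneg _)
  have hX : (0:ℝ) ≤ ε ^ (-(1:ℝ)/2) := Real.rpow_nonneg hε.le _
  have hrepr : ∫⁻ x, ENNReal.ofReal ((ε + u x) ^ (-(3:ℝ)/2)) ∂nu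
      = ENNReal.ofReal ((3:ℝ)/2) * ∫⁻ r in Set.Ioi (0:ℝ),
          nu {x | u x < r} * ENNReal.ofReal ((ε + |r|) ^ (-((5:ℝ)/2))) := by
    rw [← fiber_repr hε (by norm_num : (1:ℝ) < 5/2) hu h0,
      ← lintegral_const_mul' _ _ ENNReal.ofReal_ne_top]
    refine lintegral_congr fun x => ?_
    rw [← ENNReal.ofReal_mul (by norm_num : (0:ℝ) ≤ 3/2)]
    congr 1
    rw [show (1:ℝ) - 5/2 = -(3:ℝ)/2 by norm_num, show ((5:ℝ)/2 - 1) = 3/2 by norm_num]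
    field_simp
  rw [hrepr]
  rcases le_or_gt d ε with hcase | hcase
  · have hb : ∫⁻ r in Set.Ioi (0:ℝ), nu {x | u x < r} * ENNReal.ofReal ((ε + |r|) ^ (-((5:ℝ)/2)))
        ≤ ∫⁻ r in Set.Ioi (0:ℝ), ENNReal.ofReal ((ε + r) ^ (-(2:ℝ))) := by
      refine lintegral_mono_ae ((ae_restrict_iff' measurableSet_Ioi).2
        (Filter.Eventually.of_forall fun r hr => ?_))
      have hr0 : (0:ℝ) < r := hr
      have h1 : nu {x | u x < r} ≤ ENNReal.ofReal (Real.sqrt (ε + r)) := by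
        refine le_trans (measure_mono fun x hx => le_of_lt (show u x < r from hx)) ?_
        exact (band_sqrt w r hr0.le).trans (ENNReal.ofReal_le_ofReal
          (Real.sqrt_le_sqrt (by linarith)))
      calc nu {x | u x < r} * ENNReal.ofReal ((ε + |r|) ^ (-((5:ℝ)/2)))
          ≤ ENNReal.ofReal (Real.sqrt (ε + r)) * ENNReal.ofReal ((ε + r) ^ (-((5:ℝ)/2))) := by
            rw [abs_of_pos hr0]
            exact mul_le_mul_left h1 _
        _ = ENNReal.ofReal (Real.sqrt (ε+r) * (ε + r) ^ (-((5:ℝ)/2))) :=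
            (ENNReal.ofReal_mul (Real.sqrt_nonneg _)).symm
        _ = ENNReal.ofReal ((ε + r) ^ (-(2:ℝ))) := by
            congr 1
            rw [Real.sqrt_eq_rpow, ← Real.rpow_add (by linarith)]
            norm_num
    have hval : ∫⁻ r in Set.Ioi (0:ℝ), ENNReal.ofReal ((ε + r) ^ (-(2:ℝ)))
        = ENNReal.ofReal ((ε + 0) ^ (1-(2:ℝ)) / ((2:ℝ)-1)) := kint hε (by norm_num) le_rfl
    refine le_trans (mul_le_mul_right (hb.trans_eq hval) _) ?_
    rw [← ENNReal.ofReal_mul (by norm_num)]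
    refine ENNReal.ofReal_le_ofReal ?_
    rw [add_zero, show (1:ℝ)-(2:ℝ) = -1 by norm_num, show (2:ℝ)-1 = 1 by norm_num, div_one]
    have he1 : ε ^ (-1:ℝ) = ε ^ (-(1:ℝ)/2) * ε ^ (-(1:ℝ)/2) := by
      rw [← Real.rpow_add hε]; norm_num
    have he2 : (2*ε) ^ (-(1:ℝ)/2) ≤ (ε + d) ^ (-(1:ℝ)/2) :=
      Real.rpow_le_rpow_of_nonpos (by positivity) (by linarith) (by norm_num)
    have he3 : (2*ε) ^ (-(1:ℝ)/2) = 2 ^ (-(1:ℝ)/2) * ε ^ (-(1:ℝ)/2) :=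
      Real.mul_rpow (by norm_num) hε.le
    have he4 : (1:ℝ)/2 ≤ 2 ^ (-(1:ℝ)/2) := by
      rw [rpow_nhalf (by norm_num : (0:ℝ) ≤ 2)]
      have h4 : Real.sqrt 2 ≤ 2 := by
        have : Real.sqrt 4 = 2 := by
          rw [show (4:ℝ) = 2^2 by norm_num, Real.sqrt_sq (by norm_num : (0:ℝ) ≤ 2)]
        calc Real.sqrt 2 ≤ Real.sqrt 4 := Real.sqrt_le_sqrt (by norm_num)
        _ = 2 := this
      have hs0 : 0 < Real.sqrt 2 := Real.sqrt_pos.2 (by norm_num)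
      simpa [one_div] using one_div_le_one_div_of_le hs0 h4
    have hfin : 9 * ε ^ (-(1:ℝ)/2) * (ε + d) ^ (-(1:ℝ)/2)
        ≥ 9 * ε ^ (-(1:ℝ)/2) * ((1/2) * ε ^ (-(1:ℝ)/2)) := by
      have h5 : (1/2) * ε ^ (-(1:ℝ)/2) ≤ (ε + d) ^ (-(1:ℝ)/2) := by
        refine le_trans ?_ he2
        rw [he3]
        exact mul_le_mul_of_nonneg_right he4 hX
      exact mul_le_mul_of_nonneg_left h5 (by positivity)
    rw [he1] at *
    nlinarith
  · have hdpos : 0 < d := hε.trans hcase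
    have hsd : 0 < Real.sqrt d := Real.sqrt_pos.2 hdpos
    have hb : ∫⁻ r in Set.Ioi (0:ℝ), nu {x | u x < r} * ENNReal.ofReal ((ε + |r|) ^ (-((5:ℝ)/2)))
        ≤ ∫⁻ r in Set.Ioi (0:ℝ),
            ENNReal.ofReal (2/Real.sqrt d) * ENNReal.ofReal ((ε + r) ^ (-((3:ℝ)/2))) := by
      refine lintegral_mono_ae ((ae_restrict_iff' measurableSet_Ioi).2
        (Filter.Eventually.of_forall fun r hr => ?_))
      have hr0 : (0:ℝ) < r := hr
      have h1 : nu {x | u x < r} ≤ ENNReal.ofReal (2*r/Real.sqrt d) := by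
        refine le_trans (measure_mono fun x hx => le_of_lt (show u x < r from hx)) ?_
        exact band_lin w r hr0 hdpos
      calc nu {x | u x < r} * ENNReal.ofReal ((ε + |r|) ^ (-((5:ℝ)/2)))
          ≤ ENNReal.ofReal (2*r/Real.sqrt d) * ENNReal.ofReal ((ε + r) ^ (-((5:ℝ)/2))) := by
            rw [abs_of_pos hr0]
            exact mul_le_mul_left h1 _
        _ = ENNReal.ofReal ((2/Real.sqrt d) * (r * (ε + r) ^ (-((5:ℝ)/2)))) := by
            rw [← ENNReal.ofReal_mul (by positivity)]
            congr 1
            ring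
        _ ≤ ENNReal.ofReal ((2/Real.sqrt d) * (ε + r) ^ (-((3:ℝ)/2))) := by
            refine ENNReal.ofReal_le_ofReal (mul_le_mul_of_nonneg_left ?_ (by positivity))
            have h2 : r * (ε+r)^(-((5:ℝ)/2)) ≤ (ε+r) * (ε+r)^(-((5:ℝ)/2)) :=
              mul_le_mul_of_nonneg_right (by linarith) (Real.rpow_nonneg (by linarith) _)
            refine h2.trans_eq ?_
            rw [show (ε+r) * (ε+r)^(-((5:ℝ)/2)) = (ε+r)^(1:ℝ) * (ε+r)^(-((5:ℝ)/2)) by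
              rw [Real.rpow_one], ← Real.rpow_add (by linarith)]
            norm_num
        _ = ENNReal.ofReal (2/Real.sqrt d) * ENNReal.ofReal ((ε + r) ^ (-((3:ℝ)/2))) :=
            ENNReal.ofReal_mul (div_nonneg (by norm_num) (Real.sqrt_nonneg d))
    have hval : ∫⁻ r in Set.Ioi (0:ℝ), ENNReal.ofReal ((ε + r) ^ (-((3:ℝ)/2)))
        = ENNReal.ofReal ((ε + 0) ^ (1-((3:ℝ)/2)) / (((3:ℝ)/2)-1)) :=
      kint hε (by norm_num) le_rfl
    rw [lintegral_const_mul' _ _ ENNReal.ofReal_ne_top, hval] at hb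
    refine le_trans (mul_le_mul_right hb _) ?_
    rw [← ENNReal.ofReal_mul (div_nonneg (by norm_num : (0:ℝ) ≤ 2) (Real.sqrt_nonneg d)),
      ← ENNReal.ofReal_mul (by norm_num : (0:ℝ) ≤ 3/2)]
    refine ENNReal.ofReal_le_ofReal ?_
    rw [add_zero, show (1:ℝ)-((3:ℝ)/2) = -(1:ℝ)/2 by norm_num,
      show ((3:ℝ)/2-1) = 1/2 by norm_num]
    -- 3/2 * (2/√d * (ε^(-1/2)/(1/2))) = 6 ε^(-1/2)/√d ≤ 9 ε^(-1/2) (ε+d)^(-1/2)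
    have hkey : 6 * Real.sqrt (ε+d) ≤ 9 * Real.sqrt d := by
      have h36 : Real.sqrt (36*(ε+d)) = 6 * Real.sqrt (ε+d) := by
        rw [show (36:ℝ)*(ε+d) = 6^2*(ε+d) by norm_num,
          Real.sqrt_mul (by norm_num : (0:ℝ) ≤ 6^2), Real.sqrt_sq (by norm_num : (0:ℝ) ≤ 6)]
      have h81 : Real.sqrt (81*d) = 9 * Real.sqrt d := by
        rw [show (81:ℝ)*d = 9^2*d by norm_num,
          Real.sqrt_mul (by norm_num : (0:ℝ) ≤ 9^2), Real.sqrt_sq (by norm_num : (0:ℝ) ≤ 9)]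
      rw [← h36, ← h81]
      exact Real.sqrt_le_sqrt (by linarith)
    have hrw1 : (ε+d) ^ (-(1:ℝ)/2) = (Real.sqrt (ε+d))⁻¹ := rpow_nhalf (by linarith)
    have hsed : 0 < Real.sqrt (ε+d) := Real.sqrt_pos.2 (by linarith)
    have h6 : 6 / Real.sqrt d ≤ 9 * (Real.sqrt (ε+d))⁻¹ := by
      rw [div_le_iff₀ hsd]
      rw [show 9 * (Real.sqrt (ε+d))⁻¹ * Real.sqrt d = 9 * Real.sqrt d / Real.sqrt (ε+d) by ring]
      rw [le_div_iff₀ hsed]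
      linarith
    calc (3:ℝ)/2 * (2/Real.sqrt d * (ε ^ (-(1:ℝ)/2)/(1/2)))
        = (6 / Real.sqrt d) * ε ^ (-(1:ℝ)/2) := by ring
      _ ≤ (9 * (Real.sqrt (ε+d))⁻¹) * ε ^ (-(1:ℝ)/2) := mul_le_mul_of_nonneg_right h6 hX
      _ = 9 * ε ^ (-(1:ℝ)/2) * (ε + d) ^ (-(1:ℝ)/2) := by rw [hrw1]; ring

lemma log_third {ε : ℝ} (hε : 0 < ε) (hε' : ε ≤ 1/3) : 1 ≤ -Real.log ε := by
  have h3 : Real.log ε ≤ Real.log (1/3) := Real.log_le_log hε hε'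
  have h13 : Real.log (1/3) = -Real.log 3 := by rw [one_div, Real.log_inv]
  have h32 : (1:ℝ) ≤ Real.log 3 := by
    rw [Real.le_log_iff_exp_le (by norm_num : (0:ℝ) < 3)]
    calc Real.exp 1 ≤ 2.7182818286 := Real.exp_one_lt_d9.le
    _ ≤ 3 := by norm_num
  linarith

lemma Klem {ε w : ℝ} (hε : 0 < ε) (hε' : ε ≤ 1/3) :
    ∫⁻ x, ENNReal.ofReal ((ε + |Real.cos (2*π*x) - w|) ^ (-(1:ℝ)/2)) ∂nu
      ≤ ENNReal.ofReal (2 * (-Real.log ε)) := by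
  set u : ℝ → ℝ := fun x => |Real.cos (2*π*x) - w| with hu'
  have hu : Measurable u :=
    (((Real.continuous_cos.comp (continuous_const.mul continuous_id)).sub
      continuous_const).abs).measurable
  have h0 : ∀ x, 0 ≤ u x := fun x => abs_nonneg _
  have hL1 : 1 ≤ -Real.log ε := log_third hε hε'
  have hrepr : ∫⁻ x, ENNReal.ofReal ((ε + u x) ^ (-(1:ℝ)/2)) ∂nu
      = ENNReal.ofReal ((1:ℝ)/2) * ∫⁻ r in Set.Ioi (0:ℝ),
          nu {x | u x < r} * ENNReal.ofReal ((ε + |r|) ^ (-((3:ℝ)/2))) := by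
    rw [← fiber_repr hε (by norm_num : (1:ℝ) < 3/2) hu h0,
      ← lintegral_const_mul' _ _ ENNReal.ofReal_ne_top]
    refine lintegral_congr fun x => ?_
    rw [← ENNReal.ofReal_mul (by norm_num : (0:ℝ) ≤ 1/2)]
    congr 1
    rw [show (1:ℝ) - 3/2 = -(1:ℝ)/2 by norm_num, show ((3:ℝ)/2 - 1) = 1/2 by norm_num]
    field_simp
  rw [hrepr]
  have hsplit : Set.Ioi (0:ℝ) = Set.Ioc 0 1 ∪ Set.Ioi 1 :=
    (Set.Ioc_union_Ioi_eq_Ioi (by norm_num : (0:ℝ) ≤ 1)).symm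
  rw [hsplit, lintegral_union measurableSet_Ioi (Set.Ioc_disjoint_Ioi le_rfl)]
  have hA : ∫⁻ r in Set.Ioc (0:ℝ) 1, nu {x | u x < r} * ENNReal.ofReal ((ε + |r|) ^ (-((3:ℝ)/2)))
      ≤ ENNReal.ofReal (Real.log (ε+1) - Real.log ε) := by
    refine le_trans ?_ (le_of_eq (lint hε))
    refine lintegral_mono_ae ((ae_restrict_iff' measurableSet_Ioc).2
      (Filter.Eventually.of_forall fun r hr => ?_))
    have hr0 : (0:ℝ) < r := hr.1
    have h1 : nu {x | u x < r} ≤ ENNReal.ofReal (Real.sqrt (ε + r)) := by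
      refine le_trans (measure_mono fun x hx => le_of_lt (show u x < r from hx)) ?_
      exact (band_sqrt w r hr0.le).trans (ENNReal.ofReal_le_ofReal
        (Real.sqrt_le_sqrt (by linarith)))
    calc nu {x | u x < r} * ENNReal.ofReal ((ε + |r|) ^ (-((3:ℝ)/2)))
        ≤ ENNReal.ofReal (Real.sqrt (ε + r)) * ENNReal.ofReal ((ε + r) ^ (-((3:ℝ)/2))) := by
          rw [abs_of_pos hr0]
          exact mul_le_mul_left h1 _
      _ = ENNReal.ofReal (Real.sqrt (ε+r) * (ε + r) ^ (-((3:ℝ)/2))) :=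
          (ENNReal.ofReal_mul (Real.sqrt_nonneg _)).symm
      _ = ENNReal.ofReal ((ε + r)⁻¹) := by
          congr 1
          rw [Real.sqrt_eq_rpow, ← Real.rpow_add (by linarith)]
          rw [show (1:ℝ)/2 + -((3:ℝ)/2) = -1 by norm_num, Real.rpow_neg_one]
  have hB : ∫⁻ r in Set.Ioi (1:ℝ), nu {x | u x < r} * ENNReal.ofReal ((ε + |r|) ^ (-((3:ℝ)/2)))
      ≤ ENNReal.ofReal 2 := by
    have hB1 : ∫⁻ r in Set.Ioi (1:ℝ), nu {x | u x < r} * ENNReal.ofReal ((ε + |r|) ^ (-((3:ℝ)/2)))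
        ≤ ∫⁻ r in Set.Ioi (1:ℝ), ENNReal.ofReal ((ε + r) ^ (-((3:ℝ)/2))) := by
      refine lintegral_mono_ae ((ae_restrict_iff' measurableSet_Ioi).2
        (Filter.Eventually.of_forall fun r hr => ?_))
      have hr0 : (0:ℝ) < r := lt_trans one_pos hr
      rw [abs_of_pos hr0]
      calc nu {x | u x < r} * ENNReal.ofReal ((ε + r) ^ (-((3:ℝ)/2)))
          ≤ 1 * ENNReal.ofReal ((ε + r) ^ (-((3:ℝ)/2))) := by
            refine mul_le_mul_left ?_ _
            calc nu {x | u x < r} ≤ nu Set.univ := measure_mono (Set.subset_univ _)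
            _ = 1 := nu_univ
        _ = ENNReal.ofReal ((ε + r) ^ (-((3:ℝ)/2))) := one_mul _
    refine hB1.trans ?_
    rw [kint hε (by norm_num : (1:ℝ) < 3/2) (by norm_num : (0:ℝ) ≤ 1)]
    refine ENNReal.ofReal_le_ofReal ?_
    rw [show (1:ℝ) - 3/2 = -(1:ℝ)/2 by norm_num, show ((3:ℝ)/2 - 1) = 1/2 by norm_num]
    have h1 : (ε + 1) ^ (-(1:ℝ)/2) ≤ 1 :=
      Real.rpow_le_one_of_one_le_of_nonpos (by linarith) (by norm_num)
    rw [div_le_iff₀ (by norm_num : (0:ℝ) < 1/2)]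
    linarith
  calc ENNReal.ofReal ((1:ℝ)/2) *
        ((∫⁻ r in Set.Ioc (0:ℝ) 1, nu {x | u x < r} * ENNReal.ofReal ((ε + |r|) ^ (-((3:ℝ)/2))))
        + ∫⁻ r in Set.Ioi (1:ℝ), nu {x | u x < r} * ENNReal.ofReal ((ε + |r|) ^ (-((3:ℝ)/2))))
      ≤ ENNReal.ofReal ((1:ℝ)/2) *
        (ENNReal.ofReal (Real.log (ε+1) - Real.log ε) + ENNReal.ofReal 2) :=
        mul_le_mul_right (add_le_add hA hB) _
    _ = ENNReal.ofReal ((1/2) * ((Real.log (ε+1) - Real.log ε) + 2)) := by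
        rw [← ENNReal.ofReal_add ?h1 (by norm_num), ← ENNReal.ofReal_mul (by norm_num)]
        case h1 =>
          have := Real.log_le_log hε (by linarith : ε ≤ ε + 1)
          linarith
    _ ≤ ENNReal.ofReal (2 * (-Real.log ε)) := by
        refine ENNReal.ofReal_le_ofReal ?_
        have hlog : Real.log (ε+1) ≤ ε := by
          have := Real.log_le_sub_one_of_pos (by linarith : (0:ℝ) < ε + 1)
          linarith
        linarith

lemma lint_pi2 (G : ℝ → ℝ → ℝ≥0∞) (hG : Measurable fun p : ℝ × ℝ => G p.1 p.2) :
    ∫⁻ q, G (q 0) (q 1) ∂(Measure.pi fun _ : Fin 2 => nu) = ∫⁻ y, ∫⁻ z, G y z ∂nu ∂nu := by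
  calc ∫⁻ q, G (q 0) (q 1) ∂(Measure.pi fun _ : Fin 2 => nu)
      = ∫⁻ p : ℝ × ℝ, G p.1 p.2 ∂(nu.prod nu) :=
        (measurePreserving_piFinTwo (fun _ : Fin 2 => nu)).lintegral_comp hG
    _ = ∫⁻ y, ∫⁻ z, G y z ∂nu ∂nu := lintegral_prod _ hG.aemeasurable

lemma lint_pi3 (G : ℝ → ℝ → ℝ → ℝ≥0∞)
    (hG : Measurable fun p : ℝ × ℝ × ℝ => G p.1 p.2.1 p.2.2) :
    ∫⁻ p, G (p 0) (p 1) (p 2) ∂(Measure.pi fun _ : Fin 3 => nu)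
      = ∫⁻ y, ∫⁻ z, ∫⁻ x, G x y z ∂nu ∂nu ∂nu := by
  have hm : Measurable fun pq : ℝ × (Fin 2 → ℝ) => ((pq.1, (pq.2 0, pq.2 1)) : ℝ × ℝ × ℝ) :=
    measurable_fst.prodMk
      (((measurable_pi_apply 0).comp measurable_snd).prodMk
        ((measurable_pi_apply 1).comp measurable_snd))
  have hg2 : Measurable fun pq : ℝ × (Fin 2 → ℝ) => G pq.1 (pq.2 0) (pq.2 1) := hG.comp hm
  have h1 : ∫⁻ p, G (p 0) (p 1) (p 2) ∂(Measure.pi fun _ : Fin 3 => nu)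
      = ∫⁻ pq : ℝ × (Fin 2 → ℝ), G pq.1 (pq.2 0) (pq.2 1)
          ∂(nu.prod (Measure.pi fun _ : Fin 2 => nu)) := by
    have h := (measurePreserving_piFinSuccAbove (fun _ : Fin 3 => nu) 0).lintegral_comp hg2
    rw [← h]
    refine lintegral_congr fun f => ?_
    have h2 : (MeasurableEquiv.piFinSuccAbove (fun _ : Fin 3 => ℝ) 0) f
        = (f 0, fun j => f ((0:Fin 3).succAbove j)) := rfl
    rw [h2]
    simp only [Fin.zero_succAbove, Fin.succ_zero_eq_one, Fin.succ_one_eq_two]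
  rw [h1, lintegral_prod_symm _ hg2.aemeasurable]
  exact lint_pi2 (fun y z => ∫⁻ x, G x y z ∂nu) hG.lintegral_prod_left'

lemma restrict_box3 :
    (volume : Measure (Fin 3 → ℝ)).restrict box3 = Measure.pi (fun _ : Fin 3 => nu) := by
  refine (Measure.pi_eq (μ := fun _ : Fin 3 => nu) fun s hs => ?_).symm
  rw [Measure.restrict_apply (MeasurableSet.univ_pi hs)]
  rw [show box3 = Set.univ.pi fun _ : Fin 3 => Set.Ico (0:ℝ) 1 from rfl]
  rw [← Set.pi_inter_distrib]
  rw [volume_pi_pi]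
  exact Finset.prod_congr rfl fun i _ => (Measure.restrict_apply (hs i)).symm

lemma disp_nonneg (p : Fin 3 → ℝ) : 0 ≤ disp p := by
  rw [disp]
  have h : ∑ i, Real.cos (2 * Real.pi * p i) ≤ 3 := by
    calc ∑ i, Real.cos (2 * Real.pi * p i) ≤ ∑ _i : Fin 3, (1:ℝ) :=
      Finset.sum_le_sum fun i _ => Real.cos_le_one _
    _ = 3 := by simp
  linarith

lemma disp_le_six (p : Fin 3 → ℝ) : disp p ≤ 6 := by
  rw [disp]
  have h : (-3:ℝ) ≤ ∑ i, Real.cos (2 * Real.pi * p i) := by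
    calc (-3:ℝ) = ∑ _i : Fin 3, (-1:ℝ) := by simp
    _ ≤ ∑ i, Real.cos (2 * Real.pi * p i) :=
      Finset.sum_le_sum fun i _ => Real.neg_one_le_cos _
  linarith

lemma pointwise_lb {ε : ℝ} (hε : 0 < ε) (hε' : ε ≤ 1/3) {γ : ℂ} (hγ : γ ∈ RectI)
    (p : Fin 3 → ℝ) :
    (ε + |disp p - γ.re|)/2 ≤ ‖(disp p : ℂ) - γ - Complex.I * (ε:ℂ)‖ := by
  set z := (disp p : ℂ) - γ - Complex.I * (ε:ℂ) with hz
  have hre : z.re = disp p - γ.re := by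
    simp [hz, Complex.sub_re, Complex.mul_re]
  have him : z.im = -γ.im - ε := by
    simp [hz, Complex.sub_im, Complex.mul_im]
  have habs1 : |z.re| ≤ ‖z‖ := Complex.abs_re_le_norm z
  have habs2 : |z.im| ≤ ‖z‖ := Complex.abs_im_le_norm z
  have hd0 := disp_nonneg p
  have hd6 := disp_le_six p
  have hrere : |z.re| = |disp p - γ.re| := by rw [hre]
  obtain ⟨h1, h2, h3, h4, h5⟩ := hγ
  rcases h5 with h | h | h | h
  · have he : |disp p - γ.re| = disp p + 1 := by
      rw [h, sub_neg_eq_add, abs_of_nonneg (by linarith)]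
    rw [hrere, he] at habs1
    rw [he]
    linarith
  · have he : |disp p - γ.re| = 7 - disp p := by
      rw [h, abs_of_nonpos (by linarith)]
      ring
    rw [hrere, he] at habs1
    rw [he]
    linarith
  · have he : |z.im| = 1 - ε := by
      rw [him, h, show -(-1:ℝ) - ε = 1 - ε by norm_num]
      exact abs_of_nonneg (by linarith)
    rw [hrere] at habs1
    rw [he] at habs2
    linarith
  · have he : |z.im| = ε := by
      rw [him, h, neg_zero, zero_sub, abs_neg, abs_of_pos hε]
    rw [hrere] at habs1
    rw [he] at habs2
    linarith

lemma pointwise_bd {ε : ℝ} (hε : 0 < ε) (hε' : ε ≤ 1/3) {γ : ℂ} (hγ : γ ∈ RectI)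
    (p : Fin 3 → ℝ) :
    ‖(disp p : ℂ) - γ - Complex.I * (ε:ℂ)‖ ^ (-(3:ℝ)/2)
      ≤ 4 * (ε + |disp p - γ.re|) ^ (-(3:ℝ)/2) := by
  have hmain := pointwise_lb hε hε' hγ p
  have habs0 := abs_nonneg (disp p - γ.re)
  have hpos : (0:ℝ) < (ε + |disp p - γ.re|)/2 := by linarith
  have h6 : ‖(disp p : ℂ) - γ - Complex.I * (ε:ℂ)‖ ^ (-(3:ℝ)/2)
      ≤ ((ε + |disp p - γ.re|)/2) ^ (-(3:ℝ)/2) :=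
    Real.rpow_le_rpow_of_nonpos hpos hmain (by norm_num)
  refine h6.trans ?_
  have hu' : (0:ℝ) ≤ ε + |disp p - γ.re| := by linarith
  rw [div_eq_mul_inv, Real.mul_rpow hu' (by norm_num : (0:ℝ) ≤ (2:ℝ)⁻¹)]
  have h7 : ((2:ℝ)⁻¹) ^ (-(3:ℝ)/2) ≤ 4 := by
    have heq : ((2:ℝ)⁻¹) ^ (-(3:ℝ)/2) = (2:ℝ) ^ ((3:ℝ)/2) := by
      rw [← Real.rpow_neg_one 2, ← Real.rpow_mul (by norm_num : (0:ℝ) ≤ 2)]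
      norm_num
    rw [heq]
    calc (2:ℝ) ^ ((3:ℝ)/2) ≤ (2:ℝ) ^ (2:ℝ) :=
      Real.rpow_le_rpow_of_exponent_le (by norm_num) (by norm_num)
    _ = 4 := by
        rw [show (2:ℝ) ^ (2:ℝ) = (2:ℝ) ^ ((2:ℕ):ℝ) from by norm_num, Real.rpow_natCast]
        norm_num
  calc (ε + |disp p - γ.re|) ^ (-(3:ℝ)/2) * ((2:ℝ)⁻¹) ^ (-(3:ℝ)/2)
      ≤ (ε + |disp p - γ.re|) ^ (-(3:ℝ)/2) * 4 :=
        mul_le_mul_of_nonneg_left h7 (Real.rpow_nonneg hu' _)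
    _ = 4 * (ε + |disp p - γ.re|) ^ (-(3:ℝ)/2) := mul_comm _ _

lemma main3d {ε a : ℝ} (hε : 0 < ε) (hε' : ε ≤ 1/3) :
    ∫⁻ p, ENNReal.ofReal ((ε + |disp p - a|) ^ (-(3:ℝ)/2)) ∂(Measure.pi fun _ : Fin 3 => nu)
      ≤ ENNReal.ofReal (36 * ε ^ (-(1:ℝ)/2) * (-Real.log ε)) := by
  have hL1 : 1 ≤ -Real.log ε := log_third hε hε'
  have hX : (0:ℝ) ≤ ε ^ (-(1:ℝ)/2) := Real.rpow_nonneg hε.le _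
  set G : ℝ → ℝ → ℝ → ℝ≥0∞ := fun x y z => ENNReal.ofReal
    ((ε + |Real.cos (2*π*x) - (3 - a - Real.cos (2*π*y) - Real.cos (2*π*z))|) ^ (-(3:ℝ)/2))
    with hG'
  have hGcont : ∀ b : ℝ, Continuous fun s : ℝ × ℝ × ℝ =>
      (ε + |Real.cos (2*π*s.1) - (3 - a - Real.cos (2*π*s.2.1) - Real.cos (2*π*s.2.2))|)
        ^ (-(3:ℝ)/2) := by
    intro b
    apply Continuous.rpow_const
    · apply continuous_const.add
      apply Continuous.abs
      apply Continuous.sub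
      · exact Real.continuous_cos.comp (continuous_const.mul continuous_fst)
      · apply Continuous.sub
        apply Continuous.sub
        · exact continuous_const
        · exact Real.continuous_cos.comp (continuous_const.mul (continuous_fst.comp continuous_snd))
        · exact Real.continuous_cos.comp (continuous_const.mul (continuous_snd.comp continuous_snd))
    · intro s
      left
      positivity
  have hGmeas : Measurable fun s : ℝ × ℝ × ℝ => G s.1 s.2.1 s.2.2 :=
    (ENNReal.continuous_ofReal.comp (hGcont 0)).measurable
  have heq : ∀ p : Fin 3 → ℝ,
      ENNReal.ofReal ((ε + |disp p - a|) ^ (-(3:ℝ)/2)) = G (p 0) (p 1) (p 2) := by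
    intro p
    rw [hG']
    congr 3
    rw [disp, Fin.sum_univ_three]
    rw [abs_sub_comm]
    congr 1
    ring
  calc ∫⁻ p, ENNReal.ofReal ((ε + |disp p - a|) ^ (-(3:ℝ)/2)) ∂(Measure.pi fun _ : Fin 3 => nu)
      = ∫⁻ p, G (p 0) (p 1) (p 2) ∂(Measure.pi fun _ : Fin 3 => nu) :=
        lintegral_congr fun p => heq p
    _ = ∫⁻ y, ∫⁻ z, ∫⁻ x, G x y z ∂nu ∂nu ∂nu := lint_pi3 G hGmeas
    _ ≤ ∫⁻ _y, ENNReal.ofReal (36 * ε ^ (-(1:ℝ)/2) * (-Real.log ε)) ∂nu := by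
        refine lintegral_mono fun y => ?_
        -- z and x integrals
        have hinner : ∀ z : ℝ, ∫⁻ x, G x y z ∂nu ≤
            ENNReal.ofReal (9 * ε ^ (-(1:ℝ)/2)) *
              (ENNReal.ofReal ((ε + |Real.cos (2*π*z) - (2 - a - Real.cos (2*π*y))|) ^ (-(1:ℝ)/2))
              + ENNReal.ofReal ((ε + |Real.cos (2*π*z) - (4 - a - Real.cos (2*π*y))|) ^ (-(1:ℝ)/2))) := by
          intro z
          set w := 3 - a - Real.cos (2*π*y) - Real.cos (2*π*z) with hw'
          refine (Jlem (w := w) hε).trans ?_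
          have hw1 : |w - 1| = |Real.cos (2*π*z) - (2 - a - Real.cos (2*π*y))| := by
            rw [show w - 1 = -(Real.cos (2*π*z) - (2 - a - Real.cos (2*π*y))) by rw [hw']; ring,
              abs_neg]
          have hw2 : |w + 1| = |Real.cos (2*π*z) - (4 - a - Real.cos (2*π*y))| := by
            rw [show w + 1 = -(Real.cos (2*π*z) - (4 - a - Real.cos (2*π*y))) by rw [hw']; ring,
              abs_neg]
          have hsplit : (ε + min |w-1| |w+1|) ^ (-(1:ℝ)/2) ≤
              (ε + |w-1|) ^ (-(1:ℝ)/2) + (ε + |w+1|) ^ (-(1:ℝ)/2) := by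
            rcases le_total |w-1| |w+1| with h | h
            · rw [min_eq_left h]
              exact le_add_of_nonneg_right (Real.rpow_nonneg (by positivity) _)
            · rw [min_eq_right h]
              exact le_add_of_nonneg_left (Real.rpow_nonneg (by positivity) _)
          have hnn1 : (0:ℝ) ≤ (ε + |w-1|) ^ (-(1:ℝ)/2) :=
            Real.rpow_nonneg (by linarith [abs_nonneg (w-1)]) _
          have hnn2 : (0:ℝ) ≤ (ε + |w+1|) ^ (-(1:ℝ)/2) :=
            Real.rpow_nonneg (by linarith [abs_nonneg (w+1)]) _
          have hstep : ENNReal.ofReal (9 * ε ^ (-(1:ℝ)/2) * (ε + min |w-1| |w+1|) ^ (-(1:ℝ)/2))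
              ≤ ENNReal.ofReal (9 * ε ^ (-(1:ℝ)/2) *
                  ((ε + |w-1|) ^ (-(1:ℝ)/2) + (ε + |w+1|) ^ (-(1:ℝ)/2))) :=
            ENNReal.ofReal_le_ofReal
              (mul_le_mul_of_nonneg_left hsplit (mul_nonneg (by norm_num) hX))
          refine hstep.trans (le_of_eq ?_)
          rw [ENNReal.ofReal_mul (mul_nonneg (by norm_num) hX), ENNReal.ofReal_add hnn1 hnn2,
            hw1, hw2]
        have hKz : ∫⁻ z, ∫⁻ x, G x y z ∂nu ∂nu ≤
            ENNReal.ofReal (9 * ε ^ (-(1:ℝ)/2)) *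
              (ENNReal.ofReal (2 * (-Real.log ε)) + ENNReal.ofReal (2 * (-Real.log ε))) := by
          have hmA : Measurable fun z : ℝ =>
              ENNReal.ofReal ((ε + |Real.cos (2*π*z) - (2 - a - Real.cos (2*π*y))|) ^ (-(1:ℝ)/2)) := by
            apply (ENNReal.continuous_ofReal.comp ?_).measurable
            apply Continuous.rpow_const
            · exact continuous_const.add (((Real.continuous_cos.comp
                (continuous_const.mul continuous_id)).sub continuous_const).abs)
            · intro s; left; positivity
          calc ∫⁻ z, ∫⁻ x, G x y z ∂nu ∂nu
              ≤ ∫⁻ z, ENNReal.ofReal (9 * ε ^ (-(1:ℝ)/2)) *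
                  (ENNReal.ofReal ((ε + |Real.cos (2*π*z) - (2 - a - Real.cos (2*π*y))|) ^ (-(1:ℝ)/2))
                  + ENNReal.ofReal ((ε + |Real.cos (2*π*z) - (4 - a - Real.cos (2*π*y))|) ^ (-(1:ℝ)/2))) ∂nu :=
                lintegral_mono fun z => hinner z
            _ = ENNReal.ofReal (9 * ε ^ (-(1:ℝ)/2)) *
                  ((∫⁻ z, ENNReal.ofReal ((ε + |Real.cos (2*π*z) - (2 - a - Real.cos (2*π*y))|) ^ (-(1:ℝ)/2)) ∂nu)
                  + ∫⁻ z, ENNReal.ofReal ((ε + |Real.cos (2*π*z) - (4 - a - Real.cos (2*π*y))|) ^ (-(1:ℝ)/2)) ∂nu) := by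
                rw [lintegral_const_mul' _ _ ENNReal.ofReal_ne_top, lintegral_add_left hmA]
            _ ≤ ENNReal.ofReal (9 * ε ^ (-(1:ℝ)/2)) *
                  (ENNReal.ofReal (2 * (-Real.log ε)) + ENNReal.ofReal (2 * (-Real.log ε))) :=
                mul_le_mul_right (add_le_add (Klem hε hε') (Klem hε hε')) _
        refine hKz.trans ?_
        rw [← ENNReal.ofReal_add (by linarith) (by linarith),
          ← ENNReal.ofReal_mul (by positivity)]
        refine ENNReal.ofReal_le_ofReal (le_of_eq ?_)
        ring
    _ = ENNReal.ofReal (36 * ε ^ (-(1:ℝ)/2) * (-Real.log ε)) := by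
        rw [lintegral_const, nu_univ, mul_one]

theorem resolvent_L32_estimate :
    ∃ C C' : ℝ, ∀ ε : ℝ, 0 < ε → ε ≤ 1 / 3 → ∀ γ ∈ RectI,
      (∫ p in box3, ‖(disp p : ℂ) - γ - Complex.I * (ε : ℂ)‖ ^ (-(3 : ℝ) / 2))
          ≤ C * ε ^ (-(1 : ℝ) / 2) * |Real.log ε| ^ ((3 : ℝ) / 2) ∧
      (∫ p in box3, ‖(disp p : ℂ) - γ - Complex.I * (ε : ℂ)‖ ^ (-(3 : ℝ) / 2))
            ^ ((2 : ℝ) / 3)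
          ≤ C' * ε ^ (-(1 : ℝ) / 3) * |Real.log ε| := by
  refine ⟨144, 144, ?_⟩
  intro ε hε hε' γ hγ
  set L := -Real.log ε with hLdef
  have hL1 : 1 ≤ L := log_third hε hε'
  have hL0 : (0:ℝ) ≤ L := by linarith
  have hlogabs : |Real.log ε| = L := by
    rw [hLdef, abs_of_neg (Real.log_neg hε (by linarith))]
  have hX : (0:ℝ) ≤ ε ^ (-(1:ℝ)/2) := Real.rpow_nonneg hε.le _
  have key : (∫⁻ p in box3, ENNReal.ofReal (‖(disp p : ℂ) - γ - Complex.I * (ε:ℂ)‖ ^ (-(3:ℝ)/2))) ≤ ENNReal.ofReal (144 * ε ^ (-(1:ℝ)/2) * L) := by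
    have k1 : (∫⁻ p in box3, ENNReal.ofReal (‖(disp p : ℂ) - γ - Complex.I * (ε:ℂ)‖ ^ (-(3:ℝ)/2))) ≤ ∫⁻ p in box3, ENNReal.ofReal (4 * (ε + |disp p - γ.re|) ^ (-(3:ℝ)/2)) :=
      lintegral_mono fun p => ENNReal.ofReal_le_ofReal (pointwise_bd hε hε' hγ p)
    have k2 : (∫⁻ p in box3, ENNReal.ofReal (4 * (ε + |disp p - γ.re|) ^ (-(3:ℝ)/2))) = ENNReal.ofReal 4 * ∫⁻ p, ENNReal.ofReal ((ε + |disp p - γ.re|) ^ (-(3:ℝ)/2)) ∂(Measure.pi fun _ : Fin 3 => nu) := by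
      rw [restrict_box3, ← lintegral_const_mul' _ _ ENNReal.ofReal_ne_top]
      refine lintegral_congr fun p => ?_
      rw [← ENNReal.ofReal_mul (by norm_num : (0:ℝ) ≤ 4)]
    have k3 : ENNReal.ofReal 4 * (∫⁻ p, ENNReal.ofReal ((ε + |disp p - γ.re|) ^ (-(3:ℝ)/2)) ∂(Measure.pi fun _ : Fin 3 => nu)) ≤ ENNReal.ofReal 4 * ENNReal.ofReal (36 * ε ^ (-(1:ℝ)/2) * L) :=
      mul_le_mul_right (main3d hε hε') _
    have k4 : ENNReal.ofReal 4 * ENNReal.ofReal (36 * ε ^ (-(1:ℝ)/2) * L) = ENNReal.ofReal (144 * ε ^ (-(1:ℝ)/2) * L) := by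
      rw [← ENNReal.ofReal_mul (by norm_num : (0:ℝ) ≤ 4)]
      congr 1
      ring
    exact ((k1.trans_eq k2).trans k3).trans_eq k4
  have hcont : Continuous fun p : Fin 3 → ℝ =>
      ‖(disp p : ℂ) - γ - Complex.I * (ε:ℂ)‖ := by
    apply continuous_norm.comp
    apply Continuous.sub (Continuous.sub ?_ continuous_const) continuous_const
    refine Complex.continuous_ofReal.comp ?_
    apply continuous_const.sub
    apply continuous_finset_sum
    intro i _
    exact Real.continuous_cos.comp (continuous_const.mul (continuous_apply i))
  have habs_m : AEStronglyMeasurable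
      (fun p : Fin 3 → ℝ => ‖(disp p : ℂ) - γ - Complex.I * (ε:ℂ)‖ ^ (-(3:ℝ)/2))
      (volume.restrict box3) := by
    refine Continuous.aestronglyMeasurable ?_
    refine Continuous.rpow_const hcont fun p => Or.inl ?_
    have h1 := pointwise_lb hε hε' hγ p
    have h2 := abs_nonneg (disp p - γ.re)
    have : (0:ℝ) < ‖(disp p : ℂ) - γ - Complex.I * (ε:ℂ)‖ := by linarith
    exact this.ne'
  have hnn : 0 ≤ᵐ[volume.restrict box3] fun p : Fin 3 → ℝ =>
      ‖(disp p : ℂ) - γ - Complex.I * (ε:ℂ)‖ ^ (-(3:ℝ)/2) :=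
    Filter.Eventually.of_forall fun p => Real.rpow_nonneg (norm_nonneg _) _
  have hXle : (∫ p in box3, ‖(disp p : ℂ) - γ - Complex.I * (ε:ℂ)‖ ^ (-(3:ℝ)/2))
      ≤ 144 * ε ^ (-(1:ℝ)/2) * L := by
    rw [integral_eq_lintegral_of_nonneg_ae hnn habs_m]
    exact ENNReal.toReal_le_of_le_ofReal
      (mul_nonneg (mul_nonneg (by norm_num) hX) hL0) key
  have hX0 : 0 ≤ ∫ p in box3, ‖(disp p : ℂ) - γ - Complex.I * (ε:ℂ)‖ ^ (-(3:ℝ)/2) :=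
    integral_nonneg fun p => Real.rpow_nonneg (norm_nonneg _) _
  have hLpow : L ≤ L ^ ((3:ℝ)/2) := by
    have h2 : L ^ (1:ℝ) ≤ L ^ ((3:ℝ)/2) :=
      Real.rpow_le_rpow_of_exponent_le hL1 (by norm_num)
    rwa [Real.rpow_one] at h2
  have hfirst : (∫ p in box3, ‖(disp p : ℂ) - γ - Complex.I * (ε:ℂ)‖ ^ (-(3:ℝ)/2))
      ≤ 144 * ε ^ (-(1:ℝ)/2) * |Real.log ε| ^ ((3:ℝ)/2) := by
    rw [hlogabs]
    refine hXle.trans ?_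
    have h3 : (0:ℝ) ≤ 144 * ε ^ (-(1:ℝ)/2) := mul_nonneg (by norm_num) hX
    calc 144 * ε ^ (-(1:ℝ)/2) * L
        ≤ (144 * ε ^ (-(1:ℝ)/2)) * L ^ ((3:ℝ)/2) := mul_le_mul_of_nonneg_left hLpow h3
      _ = 144 * ε ^ (-(1:ℝ)/2) * L ^ ((3:ℝ)/2) := by ring
  refine ⟨hfirst, ?_⟩
  have hsecond : (∫ p in box3, ‖(disp p : ℂ) - γ - Complex.I * (ε:ℂ)‖ ^ (-(3:ℝ)/2))
        ^ ((2:ℝ)/3)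
      ≤ (144 * ε ^ (-(1:ℝ)/2) * L ^ ((3:ℝ)/2)) ^ ((2:ℝ)/3) := by
    refine Real.rpow_le_rpow hX0 ?_ (by norm_num)
    have hfirst' := hfirst
    rw [hlogabs] at hfirst'
    exact hfirst'
  refine hsecond.trans ?_
  rw [hlogabs]
  have h1 : (ε ^ (-(1:ℝ)/2)) ^ ((2:ℝ)/3) = ε ^ (-(1:ℝ)/3) := by
    rw [← Real.rpow_mul hε.le]
    norm_num
  have h2 : (L ^ ((3:ℝ)/2)) ^ ((2:ℝ)/3) = L := by
    rw [← Real.rpow_mul hL0]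
    norm_num
  have hexp : (144 * ε ^ (-(1:ℝ)/2) * L ^ ((3:ℝ)/2)) ^ ((2:ℝ)/3)
      = 144 ^ ((2:ℝ)/3) * ε ^ (-(1:ℝ)/3) * L := by
    rw [Real.mul_rpow (mul_nonneg (by norm_num) hX) (Real.rpow_nonneg hL0 _),
      Real.mul_rpow (by norm_num : (0:ℝ) ≤ 144) hX, h1, h2]
  rw [hexp]
  have h144 : (144:ℝ) ^ ((2:ℝ)/3) ≤ 144 := by
    have := Real.rpow_le_rpow_of_exponent_le (by norm_num : (1:ℝ) ≤ 144)
      (by norm_num : (2:ℝ)/3 ≤ 1)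
    rwa [Real.rpow_one] at this
  have hXL : (0:ℝ) ≤ ε ^ (-(1:ℝ)/3) * L :=
    mul_nonneg (Real.rpow_nonneg hε.le _) hL0
  calc 144 ^ ((2:ℝ)/3) * ε ^ (-(1:ℝ)/3) * L
      = (ε ^ (-(1:ℝ)/3) * L) * (144:ℝ) ^ ((2:ℝ)/3) := by ring
    _ ≤ (ε ^ (-(1:ℝ)/3) * L) * 144 := mul_le_mul_of_nonneg_left h144 hXL
    _ = 144 * ε ^ (-(1:ℝ)/3) * L := by ring
end
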